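/- arXiv:1711.06965 — 5 statements merged into one kernel-verified Lean document; each statement's English description precedes it below -/
import Mathlib

section
/- The subgroup of SL(2,ℤ) generated by the two matrices S = (0 −1; 1 1) and T = (1 2; 0 1) is exactly Γ_o, and Γ_o has index 2 in SL(2,ℤ). -/
/-- The mod-2 condition defining the group `Γ_o`: the entries of the matrix are
congruent mod 2 to one of `(1 0; 0 1)`, `(0 1; 1 1)`, `(1 1; 1 0)`. -/
def GammaOmod2 (a b c d : ℤ) : Prop :=
  ((a : ZMod 2), (b : ZMod 2), (c : ZMod 2), (d : ZMod 2)) ∈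
    ({(1, 0, 0, 1), (0, 1, 1, 1), (1, 1, 1, 0)} :
      Set (ZMod 2 × ZMod 2 × ZMod 2 × ZMod 2))

/-- Membership in `Γ_o` for an element of `SL(2,ℤ)`. -/
def IsGammaO (M : Matrix.SpecialLinearGroup (Fin 2) ℤ) : Prop :=
  GammaOmod2 (M.1 0 0) (M.1 0 1) (M.1 1 0) (M.1 1 1)

/-- The matrix `S = (0 -1; 1 1)` in `SL(2,ℤ)`. -/
def Smat : Matrix.SpecialLinearGroup (Fin 2) ℤ :=
  ⟨!![0, -1; 1, 1], by norm_num [Matrix.det_fin_two_of]⟩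

/-- The matrix `T = (1 2; 0 1)` in `SL(2,ℤ)`. -/
def Tmat : Matrix.SpecialLinearGroup (Fin 2) ℤ :=
  ⟨!![1, 2; 0, 1], by norm_num [Matrix.det_fin_two_of]⟩

open Matrix ModularGroup Subgroup Matrix.SpecialLinearGroup

lemma gammaIff (a b c d : ℤ) : GammaOmod2 a b c d ↔
    ((a:ZMod 2)=1 ∧ (b:ZMod 2)=0 ∧ (c:ZMod 2)=0 ∧ (d:ZMod 2)=1) ∨
    ((a:ZMod 2)=0 ∧ (b:ZMod 2)=1 ∧ (c:ZMod 2)=1 ∧ (d:ZMod 2)=1) ∨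
    ((a:ZMod 2)=1 ∧ (b:ZMod 2)=1 ∧ (c:ZMod 2)=1 ∧ (d:ZMod 2)=0) := by
  simp [GammaOmod2, Set.mem_insert_iff, Prod.ext_iff]

/-- `Γ_o` as a subgroup of `SL(2,ℤ)`. -/
def Kgrp : Subgroup (Matrix.SpecialLinearGroup (Fin 2) ℤ) where
  carrier := {M | IsGammaO M}
  one_mem' := by
    show IsGammaO 1
    unfold IsGammaO
    rw [gammaIff]
    left
    norm_num [SpecialLinearGroup.coe_one, Matrix.one_apply]
  mul_mem' := by
    intro A B hA hB
    have hA' := (gammaIff _ _ _ _).mp hA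
    have hB' := (gammaIff _ _ _ _).mp hB
    show IsGammaO (A * B)
    unfold IsGammaO
    rw [gammaIff]
    have e : ∀ i j, (((A * B).1 i j : ℤ) : ZMod 2) =
        (A.1 i 0 : ZMod 2) * (B.1 0 j : ZMod 2) + (A.1 i 1 : ZMod 2) * (B.1 1 j : ZMod 2) := by
      intro i j
      have : (A * B).1 i j = A.1 i 0 * B.1 0 j + A.1 i 1 * B.1 1 j := by
        show (A.1 * B.1) i j = _
        rw [Matrix.mul_apply, Fin.sum_univ_two]
      rw [this]; push_cast; ring
    rcases hA' with ⟨h1,h2,h3,h4⟩|⟨h1,h2,h3,h4⟩|⟨h1,h2,h3,h4⟩ <;>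
      rcases hB' with ⟨g1,g2,g3,g4⟩|⟨g1,g2,g3,g4⟩|⟨g1,g2,g3,g4⟩ <;>
      simp only [e, h1,h2,h3,h4,g1,g2,g3,g4] <;> decide
  inv_mem' := by
    intro A hA
    have hA' := (gammaIff _ _ _ _).mp hA
    show IsGammaO A⁻¹
    unfold IsGammaO
    rw [SL2_inv_expl A]
    rw [gammaIff]
    simp only [Matrix.cons_val', Matrix.cons_val_zero, Matrix.cons_val_one, Matrix.head_cons,
      Matrix.head_fin_const, Matrix.empty_val', Matrix.cons_val_fin_one, Int.cast_neg]
    rcases hA' with ⟨h1,h2,h3,h4⟩|⟨h1,h2,h3,h4⟩|⟨h1,h2,h3,h4⟩ <;>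
      simp only [h1,h2,h3,h4] <;> decide

lemma mem_Kgrp (M : Matrix.SpecialLinearGroup (Fin 2) ℤ) : M ∈ Kgrp ↔ IsGammaO M := Iff.rfl

lemma T_not_mem_Kgrp : ModularGroup.T ∉ Kgrp := by
  intro h
  rw [mem_Kgrp] at h
  unfold IsGammaO at h
  rw [gammaIff] at h
  norm_num [coe_T] at h

lemma coe_Smat : (Smat : Matrix (Fin 2) (Fin 2) ℤ) = !![0, -1; 1, 1] := rfl
lemma coe_Tmat : (Tmat : Matrix (Fin 2) (Fin 2) ℤ) = !![1, 2; 0, 1] := rfl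

lemma id1 : ModularGroup.T * Smat = Tmat * Smat ^ 2 * ModularGroup.T := by
  apply Subtype.coe_injective
  simp [SpecialLinearGroup.coe_mul, coe_T, coe_Smat, coe_Tmat, pow_two, Matrix.mul_fin_two]

lemma id2 : Smat * ModularGroup.T = ModularGroup.T * (Smat ^ 2 * Tmat) := by
  apply Subtype.coe_injective
  simp [SpecialLinearGroup.coe_mul, coe_T, coe_Smat, coe_Tmat, pow_two, Matrix.mul_fin_two]

lemma id3 : ModularGroup.S * ModularGroup.T = Smat := by
  apply Subtype.coe_injective
  simp [SpecialLinearGroup.coe_mul, coe_T, coe_S, Smat, Matrix.mul_fin_two]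

lemma id4 : ModularGroup.T * ModularGroup.T = Tmat := by
  apply Subtype.coe_injective
  simp [SpecialLinearGroup.coe_mul, coe_T, Tmat, Matrix.mul_fin_two]

lemma emod_natAbs_lt (a c : ℤ) (hc : c ≠ 0) : (a % c).natAbs < c.natAbs := by
  have h1 : 0 ≤ a % c := Int.emod_nonneg a hc
  rcases hc.lt_or_gt with h | h
  · have h2 : a % c < -c := by
      have := Int.emod_lt_of_pos a (neg_pos.mpr h)
      rwa [Int.emod_neg] at this
    omega
  · have h2 : a % c < c := Int.emod_lt_of_pos a h
    omega

lemma mem_closure_ST : ∀ (n : ℕ) (M : Matrix.SpecialLinearGroup (Fin 2) ℤ),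
    (M.1 1 0).natAbs = n →
    M ∈ Subgroup.closure ({ModularGroup.S, ModularGroup.T} :
      Set (Matrix.SpecialLinearGroup (Fin 2) ℤ)) := by
  have hS : ModularGroup.S ∈ Subgroup.closure ({ModularGroup.S, ModularGroup.T} :
      Set (Matrix.SpecialLinearGroup (Fin 2) ℤ)) := subset_closure (by simp)
  have hT : ModularGroup.T ∈ Subgroup.closure ({ModularGroup.S, ModularGroup.T} :
      Set (Matrix.SpecialLinearGroup (Fin 2) ℤ)) := subset_closure (by simp)
  intro n
  induction n using Nat.strong_induction_on with
  | _ n ih =>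
    intro M hn
    rcases eq_or_ne (M.1 1 0) 0 with hc | hc
    · have hdet : M.1 0 0 * M.1 1 1 - M.1 0 1 * M.1 1 0 = 1 := by
        have := M.2; rwa [Matrix.det_fin_two] at this
      rw [hc, mul_zero, sub_zero] at hdet
      rcases Int.mul_eq_one_iff_eq_one_or_neg_one.mp hdet with ⟨ha, hd⟩ | ⟨ha, hd⟩
      · have hM : M = ModularGroup.T ^ (M.1 0 1) := by
          apply Subtype.coe_injective
          show M.1 = (ModularGroup.T ^ (M.1 0 1)).1
          rw [coe_T_zpow]
          conv_lhs => rw [Matrix.eta_fin_two (M : Matrix (Fin 2) (Fin 2) ℤ)]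
          rw [ha, hd, hc]
        rw [hM]; exact zpow_mem hT _
      · have hM : M = ModularGroup.S * ModularGroup.S * ModularGroup.T ^ (-(M.1 0 1)) := by
          apply Subtype.coe_injective
          show M.1 = ModularGroup.S.1 * ModularGroup.S.1 * (ModularGroup.T ^ (-(M.1 0 1))).1
          rw [coe_T_zpow, coe_S]
          conv_lhs => rw [Matrix.eta_fin_two (M : Matrix (Fin 2) (Fin 2) ℤ)]
          rw [ha, hd, hc]
          norm_num [Matrix.mul_fin_two]
        rw [hM]; exact mul_mem (mul_mem hS hS) (zpow_mem hT _)
    · set a := M.1 0 0 with ha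
      set c := M.1 1 0 with hcdef
      set N := ModularGroup.S * ModularGroup.T ^ (-(a / c)) * M with hNdef
      have hNc : N.1 1 0 = a % c := by
        show (ModularGroup.S.1 * (ModularGroup.T ^ (-(a / c))).1 * M.1) 1 0 = a % c
        rw [coe_T_zpow, coe_S]
        rw [Matrix.eta_fin_two (M : Matrix (Fin 2) (Fin 2) ℤ)]
        norm_num [Matrix.mul_fin_two]
        rw [Int.emod_def]; ring
      have hlt : (N.1 1 0).natAbs < n := by
        rw [hNc, ← hn]; exact emod_natAbs_lt a c hc
      have hN := ih _ hlt N rfl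
      have hM : M = (ModularGroup.S * ModularGroup.T ^ (-(a / c)))⁻¹ * N := by
        rw [hNdef]; group
      rw [hM]
      exact mul_mem (inv_mem (mul_mem hS (zpow_mem hT _))) hN

section

abbrev Hgrp : Subgroup (Matrix.SpecialLinearGroup (Fin 2) ℤ) :=
  Subgroup.closure ({Smat, Tmat} : Set (Matrix.SpecialLinearGroup (Fin 2) ℤ))

lemma hSm : Smat ∈ Hgrp := subset_closure (by simp)
lemma hTm : Tmat ∈ Hgrp := subset_closure (by simp)

lemma conj_T {x : Matrix.SpecialLinearGroup (Fin 2) ℤ} (hx : x ∈ Hgrp) :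
    ModularGroup.T⁻¹ * x * ModularGroup.T ∈ Hgrp ∧
    ModularGroup.T * x * ModularGroup.T⁻¹ ∈ Hgrp := by
  induction hx using closure_induction with
  | mem y hy =>
    simp only [Set.mem_insert_iff, Set.mem_singleton_iff] at hy
    rcases hy with rfl | rfl
    · constructor
      · have h : ModularGroup.T⁻¹ * Smat * ModularGroup.T = Smat ^ 2 * Tmat := by
          rw [mul_assoc, id2, ← mul_assoc, inv_mul_cancel, one_mul]
        rw [h]; exact mul_mem (pow_mem hSm 2) hTm
      · have h : ModularGroup.T * Smat * ModularGroup.T⁻¹ = Tmat * Smat ^ 2 := by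
          rw [id1, mul_assoc, mul_inv_cancel, mul_one]
        rw [h]; exact mul_mem hTm (pow_mem hSm 2)
    · constructor
      · have h : ModularGroup.T⁻¹ * Tmat * ModularGroup.T = Tmat := by
          rw [← id4]; group
        rw [h]; exact hTm
      · have h : ModularGroup.T * Tmat * ModularGroup.T⁻¹ = Tmat := by
          rw [← id4]; group
        rw [h]; exact hTm
  | one => constructor <;> simpa using one_mem Hgrp
  | mul x y hx hy ihx ihy =>
    constructor
    · have h : ModularGroup.T⁻¹ * (x * y) * ModularGroup.T =
          (ModularGroup.T⁻¹ * x * ModularGroup.T) * (ModularGroup.T⁻¹ * y * ModularGroup.T) := by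
        group
      rw [h]; exact mul_mem ihx.1 ihy.1
    · have h : ModularGroup.T * (x * y) * ModularGroup.T⁻¹ =
          (ModularGroup.T * x * ModularGroup.T⁻¹) * (ModularGroup.T * y * ModularGroup.T⁻¹) := by
        group
      rw [h]; exact mul_mem ihx.2 ihy.2
  | inv x hx ihx =>
    constructor
    · have h : ModularGroup.T⁻¹ * x⁻¹ * ModularGroup.T =
          (ModularGroup.T⁻¹ * x * ModularGroup.T)⁻¹ := by group
      rw [h]; exact inv_mem ihx.1
    · have h : ModularGroup.T * x⁻¹ * ModularGroup.T⁻¹ =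
          (ModularGroup.T * x * ModularGroup.T⁻¹)⁻¹ := by group
      rw [h]; exact inv_mem ihx.2

lemma coset_cover (b : Matrix.SpecialLinearGroup (Fin 2) ℤ) :
    b ∈ Hgrp ∨ b * ModularGroup.T ∈ Hgrp := by
  have hb : b ∈ Subgroup.closure ({ModularGroup.S, ModularGroup.T} :
      Set (Matrix.SpecialLinearGroup (Fin 2) ℤ)) := mem_closure_ST _ b rfl
  induction hb using closure_induction with
  | mem y hy =>
    simp only [Set.mem_insert_iff, Set.mem_singleton_iff] at hy
    rcases hy with rfl | rfl
    · right; rw [id3]; exact hSm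
    · right; rw [id4]; exact hTm
  | one => left; exact one_mem _
  | mul x y hx hy ihx ihy =>
    rcases ihx with ihx | ihx <;> rcases ihy with ihy | ihy
    · left; exact mul_mem ihx ihy
    · right; rw [mul_assoc]; exact mul_mem ihx ihy
    · right
      have h : x * y * ModularGroup.T =
          (x * ModularGroup.T) * (ModularGroup.T⁻¹ * y * ModularGroup.T) := by group
      rw [h]; exact mul_mem ihx (conj_T ihy).1
    · left
      have hmem : ModularGroup.T⁻¹ * (y * ModularGroup.T) * ModularGroup.T⁻¹ ∈ Hgrp := by
        have h : ModularGroup.T⁻¹ * (y * ModularGroup.T) * ModularGroup.T⁻¹ =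
            (ModularGroup.T⁻¹ * (y * ModularGroup.T) * ModularGroup.T) *
              (ModularGroup.T * ModularGroup.T)⁻¹ := by group
        rw [h, id4]
        exact mul_mem (conj_T ihy).1 (inv_mem hTm)
      have h : x * y = (x * ModularGroup.T) *
          (ModularGroup.T⁻¹ * (y * ModularGroup.T) * ModularGroup.T⁻¹) := by group
      rw [h]; exact mul_mem ihx hmem
  | inv x hx ihx =>
    rcases ihx with ihx | ihx
    · left; exact inv_mem ihx
    · right
      have h : x⁻¹ * ModularGroup.T =
          ((ModularGroup.T⁻¹ * (x * ModularGroup.T) * ModularGroup.T) *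
            (ModularGroup.T * ModularGroup.T)⁻¹)⁻¹ := by group
      rw [h, id4]
      exact inv_mem (mul_mem (conj_T ihx).1 (inv_mem hTm))

lemma HleK : Hgrp ≤ Kgrp := by
  rw [closure_le]
  intro x hx
  simp only [Set.mem_insert_iff, Set.mem_singleton_iff] at hx
  rcases hx with rfl | rfl
  · show IsGammaO Smat
    unfold IsGammaO
    rw [gammaIff]
    right; left
    norm_num [Smat]
    decide
  · show IsGammaO Tmat
    unfold IsGammaO
    rw [gammaIff]
    left
    norm_num [Tmat]
    decide

end

/-- The subgroup of `SL(2,ℤ)` generated by `S = (0 -1; 1 1)` and `T = (1 2; 0 1)`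
is exactly `Γ_o`, and `Γ_o` has index `2` in `SL(2,ℤ)`. -/
theorem generated_eq_GammaO_and_index_two :
    (∀ M : Matrix.SpecialLinearGroup (Fin 2) ℤ,
      M ∈ Subgroup.closure ({Smat, Tmat} :
        Set (Matrix.SpecialLinearGroup (Fin 2) ℤ)) ↔ IsGammaO M) ∧
    (Subgroup.closure ({Smat, Tmat} :
        Set (Matrix.SpecialLinearGroup (Fin 2) ℤ))).index = 2 := by
  have hTnot : ModularGroup.T ∉ Hgrp := fun h => T_not_mem_Kgrp (HleK h)
  have hidx : Hgrp.index = 2 := by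
    rw [Subgroup.index_eq_two_iff]
    refine ⟨ModularGroup.T, fun b => ?_⟩
    rcases coset_cover b with hb | hb
    · exact Or.inr ⟨hb, fun h => hTnot (by simpa using mul_mem (inv_mem hb) h)⟩
    · exact Or.inl ⟨hb, fun h => hTnot (by simpa using mul_mem (inv_mem h) hb)⟩
  have hKT : Kgrp ≠ ⊤ := fun h => T_not_mem_Kgrp (h ▸ Subgroup.mem_top ModularGroup.T)
  have h1 : Hgrp.relIndex Kgrp * Kgrp.index = Hgrp.index := Subgroup.relIndex_mul_index HleK
  rw [hidx] at h1
  have hK2 : Kgrp.index = 2 := by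
    have hdvd : Kgrp.index ∣ 2 := Dvd.intro_left _ h1
    rcases (Nat.prime_two.eq_one_or_self_of_dvd _ hdvd) with h | h
    · exact absurd (Subgroup.index_eq_one.mp h) hKT
    · exact h
  have hrel : Hgrp.relIndex Kgrp = 1 := by rw [hK2] at h1; omega
  have hKH : Kgrp ≤ Hgrp := Subgroup.relIndex_eq_one.mp hrel
  have hHeq : Hgrp = Kgrp := le_antisymm HleK hKH
  exact ⟨fun M => by rw [show Subgroup.closure ({Smat, Tmat} :
      Set (Matrix.SpecialLinearGroup (Fin 2) ℤ)) = Kgrp from hHeq]; exact mem_Kgrp M, hidx⟩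
end

section
/- Let r ≥ 1 and let (α, β) ∈ S_o with α > 1 and α, β irrational, and suppose T̄_o^r(1/α, −β) = (1/α, −β). Then ρ_o^r(α, β) = (s·α, s·β), where s = ∏_{i=1}^{r} (−ε_o(T_o^{i−1}(1/α))) ∈ {±1}, and consequently ρ_o^{2r}(α, β) = (α, β). -/
/-- The golden ratio `G = (1+√5)/2`. -/
noncomputable def G : ℝ := (1 + Real.sqrt 5) / 2

/-- `a_o(x)`: the unique odd integer among `⌊1/x⌋`, `⌊1/x⌋ + 1`. -/
noncomputable def aO (x : ℝ) : ℤ := if Odd ⌊1 / x⌋ then ⌊1 / x⌋ else ⌊1 / x⌋ + 1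

/-- `ε_o(x) = sign(1/x − a_o(x))`. -/
noncomputable def epsO (x : ℝ) : ℝ := if 0 < 1 / x - aO x then 1 else -1

/-- The odd-continued-fraction Gauss map `T_o(x) = |1/x − a_o(x)|`. -/
noncomputable def TO (x : ℝ) : ℝ := |1 / x - aO x|

/-- The natural extension `T̄_o(x,y) = (T_o x, ε_o(x)/(a_o(x)+y))`. -/
noncomputable def barTO (p : ℝ × ℝ) : ℝ × ℝ :=
  (TO p.1, epsO p.1 / ((aO p.1 : ℝ) + p.2))

/-- The sign of a (nonzero) real number. -/
noncomputable def sgn (t : ℝ) : ℝ := if 0 < t then 1 else -1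

/-- For `|x| > 1`, the unique odd integer among `⌊|x|⌋`, `⌊|x|⌋ + 1`. -/
noncomputable def aAbsO (x : ℝ) : ℤ :=
  if Odd ⌊|x|⌋ then ⌊|x|⌋ else ⌊|x|⌋ + 1

/-- The first-return map `ρ_o(x,y) = (g x, g y)`, `g t = 1/(sign(x)·a(x) − t)`. -/
noncomputable def rhoO (p : ℝ × ℝ) : ℝ × ℝ :=
  (1 / (sgn p.1 * (aAbsO p.1 : ℝ) - p.1), 1 / (sgn p.1 * (aAbsO p.1 : ℝ) - p.2))


/-! ### Auxiliary lemmas -/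

private lemma epsO_pm (x : ℝ) : epsO x = 1 ∨ epsO x = -1 := by
  unfold epsO; split <;> simp

private lemma one_div_pm_mul {c t : ℝ} (hc : c = 1 ∨ c = -1) : 1 / (c * t) = c / t := by
  rcases hc with h | h <;> subst h <;> simp [neg_div, inv_neg]

private lemma key_aux {x : ℝ} (hx0 : 0 < x) (hx1 : x < 1) (hix : Irrational x) :
    1 / x - (aO x : ℝ) = epsO x * TO x ∧ 0 < TO x ∧ TO x < 1 ∧ Irrational (TO x) := by
  have hinv : Irrational (1 / x) := by rw [one_div]; exact hix.inv
  have hu : Irrational (1 / x - (aO x : ℝ)) := hinv.sub_intCast _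
  have hune : 1 / x - (aO x : ℝ) ≠ 0 := hu.ne_zero
  have hfl : (⌊1 / x⌋ : ℝ) ≤ 1 / x := Int.floor_le _
  have hfl2 : 1 / x < (⌊1 / x⌋ : ℝ) + 1 := Int.lt_floor_add_one _
  have hfls : (⌊1 / x⌋ : ℝ) < 1 / x := lt_of_le_of_ne hfl (Ne.symm (hinv.ne_int _))
  have hb : -1 < 1 / x - (aO x : ℝ) ∧ 1 / x - (aO x : ℝ) < 1 := by
    unfold aO; split <;> push_cast <;> constructor <;> linarith
  have hTlt : TO x < 1 := by
    unfold TO; rw [abs_lt]; exact ⟨hb.1, hb.2⟩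
  have hTpos : 0 < TO x := abs_pos.mpr hune
  have hkey : 1 / x - (aO x : ℝ) = epsO x * TO x := by
    unfold epsO TO
    rcases lt_or_gt_of_ne hune with h | h
    · rw [if_neg (by linarith), abs_of_neg h]; ring
    · rw [if_pos h, abs_of_pos h]; ring
  have hTirr : Irrational (TO x) := by
    unfold TO
    rcases abs_choice (1 / x - (aO x : ℝ)) with h | h <;> rw [h]
    · exact hu
    · exact hu.neg
  exact ⟨hkey, hTpos, hTlt, hTirr⟩

private lemma rho_step {x y s : ℝ} (hx0 : 0 < x) (hx1 : x < 1) (hix : Irrational x)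
    (hiy : Irrational y) (hs : s = 1 ∨ s = -1) :
    rhoO (s / x, s * -y)
      = ((s * -epsO x) / TO x, (s * -epsO x) * -(epsO x / ((aO x : ℝ) + y))) := by
  obtain ⟨hkey, hTpos, hTlt, hTirr⟩ := key_aux hx0 hx1 hix
  have hay : ((aO x : ℝ) + y) ≠ 0 := (hiy.intCast_add (aO x)).ne_zero
  have habs : |s / x| = 1 / x := by
    have : |s| = 1 := by rcases hs with h | h <;> subst h <;> norm_num
    rw [abs_div, this, abs_of_pos hx0]
  have ha : aAbsO (s / x) = aO x := by
    unfold aAbsO aO; rw [habs]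
  have hsgn : sgn (s / x) = s := by
    rcases hs with h | h <;> subst h <;> unfold sgn
    · rw [if_pos (by positivity)]
    · rw [if_neg]
      push_neg
      have : (-1 : ℝ) / x < 0 := by
        apply div_neg_of_neg_of_pos <;> [norm_num; exact hx0]
      linarith
  have hse : s * -epsO x = 1 ∨ s * -epsO x = -1 := by
    rcases hs with h | h <;> rcases epsO_pm x with h2 | h2 <;> rw [h, h2] <;> norm_num
  have heps2 : epsO x * epsO x = 1 := by
    rcases epsO_pm x with h | h <;> rw [h] <;> norm_num
  unfold rhoO
  simp only [ha, hsgn]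
  have e1 : s * ((aO x : ℝ)) - s / x = (s * -epsO x) * TO x := by
    have hdx : s / x = s * (1 / x) := by ring
    rw [hdx]; linear_combination (-s) * hkey
  have e2 : s * ((aO x : ℝ)) - s * -y = s * ((aO x : ℝ) + y) := by ring
  rw [e1, e2, one_div_pm_mul hse, one_div_pm_mul hs]
  have e3 : (s * -epsO x) * -(epsO x / ((aO x : ℝ) + y))
      = s * (epsO x * epsO x) / ((aO x : ℝ) + y) := by ring
  rw [e3, heps2, mul_one]

private lemma y_step_irr {x y : ℝ} (hiy : Irrational y) :
    Irrational (epsO x / ((aO x : ℝ) + y)) := by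
  have h1 : Irrational ((aO x : ℝ) + y) := hiy.intCast_add (aO x)
  have h2 : Irrational (((aO x : ℝ) + y)⁻¹) := h1.inv
  rcases epsO_pm x with h | h <;> rw [h]
  · rwa [one_div]
  · rw [div_eq_mul_inv, neg_one_mul]
    exact h2.neg

private lemma barTO_fst_iter (k : ℕ) (p : ℝ × ℝ) : (barTO^[k] p).1 = TO^[k] p.1 := by
  induction k with
  | zero => rfl
  | succ n ih =>
    rw [Function.iterate_succ_apply', Function.iterate_succ_apply']
    show TO (barTO^[n] p).1 = TO (TO^[n] p.1)
    rw [ih]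

private lemma prod_sign_pm (f : ℕ → ℝ) (k : ℕ) :
    (∏ i ∈ Finset.range k, -epsO (f i)) = 1 ∨ (∏ i ∈ Finset.range k, -epsO (f i)) = -1 := by
  induction k with
  | zero => left; simp
  | succ n ih =>
    rw [Finset.prod_range_succ]
    rcases ih with h | h <;> rcases epsO_pm (f n) with h2 | h2 <;> rw [h, h2] <;> norm_num

private lemma master (α β : ℝ) (hα : 1 < α) (hirrα : Irrational α) (hirrβ : Irrational β)
    (k : ℕ) :
    0 < (barTO^[k] (1 / α, -β)).1 ∧ (barTO^[k] (1 / α, -β)).1 < 1 ∧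
    Irrational (barTO^[k] (1 / α, -β)).1 ∧ Irrational (barTO^[k] (1 / α, -β)).2 ∧
    rhoO^[k] (α, β) =
      ((∏ i ∈ Finset.range k, -epsO (TO^[i] (1 / α))) / (barTO^[k] (1 / α, -β)).1,
       (∏ i ∈ Finset.range k, -epsO (TO^[i] (1 / α))) * -(barTO^[k] (1 / α, -β)).2) := by
  have hα0 : (0 : ℝ) < α := lt_trans one_pos hα
  induction k with
  | zero =>
    refine ⟨?_, ?_, ?_, ?_, ?_⟩ <;> simp only [Function.iterate_zero_apply]
    · positivity
    · rw [div_lt_one hα0]; exact hα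
    · rw [one_div]; exact hirrα.inv
    · exact hirrβ.neg
    · simp [one_div_one_div]
  | succ n ih =>
    obtain ⟨h0, h1, hix, hiy, heq⟩ := ih
    set P := barTO^[n] (1 / α, -β) with hP
    have hstep := rho_step (y := P.2) h0 h1 hix hiy
      (prod_sign_pm (fun i => TO^[i] (1 / α)) n)
    have hnext : barTO^[n + 1] (1 / α, -β) = barTO P := by
      rw [Function.iterate_succ_apply']
    have hb1 : (barTO P).1 = TO P.1 := rfl
    have hb2 : (barTO P).2 = epsO P.1 / ((aO P.1 : ℝ) + P.2) := rfl
    obtain ⟨hkey, hTpos, hTlt, hTirr⟩ := key_aux h0 h1 hix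
    have hfst : P.1 = TO^[n] (1 / α) := barTO_fst_iter n _
    refine ⟨by rw [hnext, hb1]; exact hTpos, by rw [hnext, hb1]; exact hTlt,
      by rw [hnext, hb1]; exact hTirr, by rw [hnext, hb2]; exact y_step_irr hiy, ?_⟩
    rw [Function.iterate_succ_apply', heq]
    rw [hstep, hnext, hb1, hb2, Finset.prod_range_succ, ← hfst]

/-- Corollary 4: if `(α, β) ∈ S_o` with `α > 1` irrational, `β` irrational, and
`T̄_o^r(1/α, −β) = (1/α, −β)`, then `ρ_o^r(α,β) = (s·α, s·β)` with
`s = ∏_{i=1}^{r}(−ε_o(T_o^{i−1}(1/α)))`, and `ρ_o^{2r}(α,β) = (α,β)`. -/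
theorem rhoO_iterate_of_periodic (r : ℕ) (hr : 1 ≤ r) (α β : ℝ)
    (hα : 1 < α) (hirrα : Irrational α) (hirrβ : Irrational β)
    (hβ₁ : -G < β) (hβ₂ : β < 2 - G)
    (hper : barTO^[r] (1 / α, -β) = (1 / α, -β)) :
    (rhoO^[r] (α, β) =
      ((∏ i ∈ Finset.range r, -epsO (TO^[i] (1 / α))) * α,
       (∏ i ∈ Finset.range r, -epsO (TO^[i] (1 / α))) * β)) ∧
    rhoO^[2 * r] (α, β) = (α, β) := by
  have hα0 : (0 : ℝ) < α := lt_trans one_pos hα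
  have hM := master α β hα hirrα hirrβ
  -- value at r
  obtain ⟨_, _, _, _, heqr⟩ := hM r
  rw [hper] at heqr
  have hs := prod_sign_pm (fun i => TO^[i] (1 / α)) r
  set s := ∏ i ∈ Finset.range r, -epsO (TO^[i] (1 / α)) with hsdef
  have hfirst : rhoO^[r] (α, β) = (s * α, s * β) := by
    rw [heqr]
    have h1 : s / (1 / α) = s * α := by field_simp
    rw [h1, neg_neg]
  refine ⟨hfirst, ?_⟩
  -- periodicity of the TO orbit
  have hTOper : TO^[r] (1 / α) = 1 / α := by
    have := barTO_fst_iter r ((1 : ℝ) / α, -β)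
    rw [hper] at this; exact this.symm
  have hXper : ∀ i, TO^[r + i] (1 / α) = TO^[i] (1 / α) := by
    intro i
    rw [Nat.add_comm, Function.iterate_add_apply, hTOper]
  -- value at 2r
  obtain ⟨_, _, _, _, heq2r⟩ := hM (2 * r)
  have hper2 : barTO^[2 * r] ((1 : ℝ) / α, -β) = (1 / α, -β) := by
    rw [two_mul, Function.iterate_add_apply, hper, hper]
  rw [hper2] at heq2r
  have hprod2 : (∏ i ∈ Finset.range (2 * r), -epsO (TO^[i] (1 / α))) = s * s := by
    rw [two_mul, Finset.prod_range_add, ← hsdef]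
    congr 1
    exact Finset.prod_congr rfl (fun i _ => by rw [hXper i])
  have hss : s * s = 1 := by rcases hs with h | h <;> rw [h] <;> norm_num
  rw [heq2r, hprod2, hss]
  simp [one_div_one_div]
end

section
/- The Borel measure μ̄_o on Ω_o = (0,1)×(G−2,G) with density (x,y) ↦ (1+xy)⁻² with respect to two-dimensional Lebesgue measure is finite and T̄_o-invariant: μ̄_o(T̄_o⁻¹(E)) = μ̄_o(E) for every Borel set E ⊆ Ω_o. -/
open Set MeasureTheory

/-- The measure `μ̄_o` on `Ω_o = (0,1)×(G−2,G)` with density `(1+xy)⁻²` with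
respect to the two-dimensional Lebesgue measure. -/
noncomputable def muBarO : Measure (ℝ × ℝ) :=
  ((volume : Measure (ℝ × ℝ)).restrict (Ioo (0 : ℝ) 1 ×ˢ Ioo (G - 2) G)).withDensity
    (fun p => ENNReal.ofReal (((1 + p.1 * p.2) ^ 2)⁻¹))


lemma sqrt5_lt : Real.sqrt 5 < 3 := by
  rw [show (3:ℝ) = Real.sqrt 9 by rw [show (9:ℝ) = 3^2 by norm_num, Real.sqrt_sq]; norm_num]
  exact Real.sqrt_lt_sqrt (by norm_num) (by norm_num)

lemma lt_sqrt5 : 2 < Real.sqrt 5 := by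
  rw [show (2:ℝ) = Real.sqrt 4 by rw [show (4:ℝ) = 2^2 by norm_num, Real.sqrt_sq]; norm_num]
  exact Real.sqrt_lt_sqrt (by norm_num) (by norm_num)

lemma one_lt_G : 1 < G := by unfold G; nlinarith [lt_sqrt5]
lemma G_lt_two : G < 2 := by unfold G; nlinarith [sqrt5_lt]
lemma G_sq : G ^ 2 = G + 1 := by
  have h : Real.sqrt 5 ^ 2 = 5 := Real.sq_sqrt (by norm_num)
  unfold G; nlinarith [h]
lemma inv_G_sub_one : (G - 1)⁻¹ = G := by
  have h : (G - 1) * G = 1 := by nlinarith [G_sq]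
  field_simp [show G - 1 ≠ 0 by nlinarith [one_lt_G]] at h ⊢
  linarith [h]
lemma inv_one_add_G : (1 + G)⁻¹ = 2 - G := by
  have h : (1 + G) * (2 - G) = 1 := by nlinarith [G_sq]
  rw [inv_eq_iff_eq_inv, eq_comm, inv_eq_one_div, div_eq_iff (by nlinarith [G_lt_two])]
  linarith [h]

/-! Branch data -/

noncomputable def aZ (n : ℕ) : ℤ := if Odd n then (n : ℤ) else (n : ℤ) + 1
noncomputable def eB (n : ℕ) : ℝ := if Odd n then 1 else -1
noncomputable def aB (n : ℕ) : ℝ := (aZ n : ℝ)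
def IB (n : ℕ) : Set ℝ := Ioo ((n : ℝ) + 1)⁻¹ ((n : ℝ))⁻¹
noncomputable def KB (n : ℕ) : Set ℝ := {v | eB n * v ∈ Ioo (aB n + G)⁻¹ (aB n + G - 2)⁻¹}
noncomputable def BB (n : ℕ) : Set (ℝ × ℝ) := IB n ×ˢ Ioo (G - 2) G
noncomputable def FB (n : ℕ) : ℝ × ℝ → ℝ × ℝ :=
  Prod.map (fun x => eB n / x - eB n * aB n) (fun y => eB n / (aB n + y))
noncomputable def FBinv (n : ℕ) : ℝ × ℝ → ℝ × ℝ :=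
  fun q => ((aB n + eB n * q.1)⁻¹, eB n / q.2 - aB n)

lemma branch_cases (n : ℕ) :
    (Odd n ∧ eB n = 1 ∧ aB n = n) ∨ (¬ Odd n ∧ eB n = -1 ∧ aB n = n + 1) := by
  by_cases h : Odd n
  · exact Or.inl ⟨h, by simp [eB, h], by simp [aB, aZ, h]⟩
  · exact Or.inr ⟨h, by simp [eB, h], by simp [aB, aZ, h]⟩

lemma eB_mul_self (n : ℕ) : eB n * eB n = 1 := by
  rcases branch_cases n with ⟨_, he, _⟩ | ⟨_, he, _⟩ <;> rw [he] <;> norm_num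

lemma one_le_aB {n : ℕ} (hn : 1 ≤ n) : 1 ≤ aB n := by
  have hn' : (1:ℝ) ≤ n := by exact_mod_cast hn
  rcases branch_cases n with ⟨_, _, ha⟩ | ⟨_, _, ha⟩ <;> rw [ha] <;> linarith

lemma three_le_aB {n : ℕ} (hn : 1 ≤ n) (he : eB n = -1) : 3 ≤ aB n := by
  rcases branch_cases n with ⟨_, he', _⟩ | ⟨hodd, _, ha⟩
  · rw [he'] at he; norm_num at he
  · have h2 : 2 ≤ n := by
      rcases Nat.lt_or_ge n 2 with h | h
      · interval_cases n <;> simp_all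
      · exact h
    rw [ha]; have : (2:ℝ) ≤ n := by exact_mod_cast h2
    linarith

lemma mem_IB_iff {n : ℕ} (hn : 1 ≤ n) {x : ℝ} :
    x ∈ IB n ↔ 0 < x ∧ (n : ℝ) < 1 / x ∧ 1 / x < n + 1 := by
  have hn' : (1:ℝ) ≤ n := by exact_mod_cast hn
  constructor
  · rintro ⟨h1, h2⟩
    have hx : 0 < x := lt_trans (by positivity) h1
    have e1 : (n:ℝ) * x < 1 := by
      have := mul_lt_mul_of_pos_left h2 (show (0:ℝ) < n by linarith)
      rwa [mul_inv_cancel₀ (show (n:ℝ) ≠ 0 by linarith)] at this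
    have e2 : 1 < ((n:ℝ) + 1) * x := by
      have := mul_lt_mul_of_pos_left h1 (show (0:ℝ) < (n:ℝ)+1 by linarith)
      rwa [mul_inv_cancel₀ (show ((n:ℝ)+1) ≠ 0 by linarith)] at this
    exact ⟨hx, (lt_div_iff₀ hx).2 (by linarith), (div_lt_iff₀ hx).2 (by linarith)⟩
  · rintro ⟨hx, h1, h2⟩
    have e1 : (n:ℝ) * x < 1 := by rw [lt_div_iff₀ hx] at h1; linarith
    have e2 : 1 < ((n:ℝ) + 1) * x := by rw [div_lt_iff₀ hx] at h2; linarith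
    constructor
    · rw [inv_lt_iff_one_lt_mul₀ (by linarith)]; linarith [e2]
    · rw [lt_inv_comm₀ hx (by linarith), ← one_div]; exact h1


lemma mem_IB_iff' {n : ℕ} (hn : 1 ≤ n) {x : ℝ} :
    x ∈ IB n ↔ 0 < x ∧ eB n / x - eB n * aB n ∈ Ioo (0:ℝ) 1 := by
  rw [mem_IB_iff hn]
  rcases branch_cases n with ⟨_, he, ha⟩ | ⟨_, he, ha⟩ <;>
    rw [he, ha] <;>
    simp only [mem_Ioo, one_div, neg_div, neg_mul, one_mul, sub_neg_eq_add] <;>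
    constructor <;>
    rintro ⟨hx, h1, h2⟩ <;>
    refine ⟨hx, by linarith, by linarith⟩

lemma floor_IB {n : ℕ} (hn : 1 ≤ n) {x : ℝ} (hx : x ∈ IB n) : ⌊1 / x⌋ = n := by
  obtain ⟨_, h1, h2⟩ := (mem_IB_iff hn).1 hx
  rw [Int.floor_eq_iff]
  constructor
  · push_cast; linarith
  · push_cast; linarith

lemma aO_IB {n : ℕ} (hn : 1 ≤ n) {x : ℝ} (hx : x ∈ IB n) : aO x = aZ n := by
  rw [aO, floor_IB hn hx, aZ]
  by_cases h : Odd n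
  · simp [h, Int.odd_coe_nat]
  · simp [h, Int.odd_coe_nat]

lemma barTO_IB {n : ℕ} (hn : 1 ≤ n) {p : ℝ × ℝ} (hp : p.1 ∈ IB n) :
    barTO p = FB n p := by
  obtain ⟨hx, h1, h2⟩ := (mem_IB_iff hn).1 hp
  have haO := aO_IB hn hp
  rcases branch_cases n with ⟨hodd, he, ha⟩ | ⟨hodd, he, ha⟩ <;>
  · have haR : ((aO p.1 : ℤ) : ℝ) = aB n := by rw [haO]; rfl
    have heps : epsO p.1 = eB n := by
      rw [epsO, haR, he, ha]
      first
      | rw [if_pos (by linarith)]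
      | rw [if_neg (by intro h; rw [one_div] at *; linarith)]
    have hTO : TO p.1 = eB n / p.1 - eB n * aB n := by
      rw [TO, haR, he, ha]
      first
      | rw [abs_of_pos (by linarith)]; rw [one_div]; ring
      | rw [abs_of_neg (by rw [one_div] at *; linarith)]; rw [one_div]; ring
    rw [barTO, FB, Prod.map, heps, hTO, haR]

lemma eB_cases (n : ℕ) : eB n = 1 ∨ eB n = -1 := by
  rcases branch_cases n with ⟨_, he, _⟩ | ⟨_, he, _⟩ <;> [exact Or.inl he; exact Or.inr he]

lemma KB_subset {n : ℕ} (hn : 1 ≤ n) : KB n ⊆ Ioo (G - 2) G := by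
  intro v hv
  obtain ⟨h1, h2⟩ := hv
  have ha1 : 1 ≤ aB n := one_le_aB hn
  have hG1 : 1 < G := one_lt_G
  have hden2 : 0 < aB n + G - 2 := by linarith
  have hpos : 0 < eB n * v := lt_trans (by positivity) h1
  rcases eB_cases n with he | he
  · rw [he, one_mul] at h1 h2 hpos
    constructor
    · linarith [G_lt_two]
    · calc v < (aB n + G - 2)⁻¹ := h2
        _ ≤ (G - 1)⁻¹ := by
            apply inv_anti₀ (by linarith) (by linarith)
        _ = G := inv_G_sub_one
  · have ha3 : 3 ≤ aB n := three_le_aB hn he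
    rw [he, neg_one_mul] at h1 h2 hpos
    have hv' : v < 0 := by linarith
    constructor
    · have : -v < (aB n + G - 2)⁻¹ := h2
      have h4 : (aB n + G - 2)⁻¹ ≤ (1 + G)⁻¹ :=
        inv_anti₀ (by linarith) (by linarith)
      rw [inv_one_add_G] at h4
      linarith
    · linarith

lemma aB_add_pos {n : ℕ} (hn : 1 ≤ n) {y : ℝ} (hy : y ∈ Ioo (G - 2) G) : 0 < aB n + y := by
  have := one_le_aB hn; have := one_lt_G; obtain ⟨h1, _⟩ := hy; linarith

lemma FB_mapsTo {n : ℕ} (hn : 1 ≤ n) {p : ℝ × ℝ} (hp : p ∈ BB n) :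
    FB n p ∈ Ioo (0:ℝ) 1 ×ˢ KB n := by
  obtain ⟨hx, hy⟩ := hp
  obtain ⟨hx0, hu⟩ := (mem_IB_iff' hn).1 hx
  have hay : 0 < aB n + p.2 := aB_add_pos hn hy
  refine ⟨hu, ?_⟩
  show eB n * (eB n / (aB n + p.2)) ∈ Ioo (aB n + G)⁻¹ (aB n + G - 2)⁻¹
  have : eB n * (eB n / (aB n + p.2)) = (aB n + p.2)⁻¹ := by
    rw [mul_div_assoc', eB_mul_self, one_div]
  rw [this]
  have h1 : 0 < aB n + G - 2 := by have := one_le_aB hn; have := one_lt_G; linarith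
  obtain ⟨hy1, hy2⟩ := hy
  constructor
  · exact inv_strictAnti₀ hay (by linarith)
  · exact inv_strictAnti₀ (by linarith) (by linarith)

lemma FB_leftInv {n : ℕ} (hn : 1 ≤ n) {p : ℝ × ℝ} (hp : p ∈ BB n) :
    FBinv n (FB n p) = p := by
  obtain ⟨hx, hy⟩ := hp
  obtain ⟨hx0, _⟩ := (mem_IB_iff' hn).1 hx
  have hay : 0 < aB n + p.2 := aB_add_pos hn hy
  have he2 : eB n * eB n = 1 := eB_mul_self n
  have he0 : eB n ≠ 0 := by rcases eB_cases n with h | h <;> rw [h] <;> norm_num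
  rw [FBinv, FB]
  apply Prod.ext <;> show _ = _
  · show (aB n + eB n * (eB n / p.1 - eB n * aB n))⁻¹ = p.1
    rw [mul_sub, mul_div_assoc', he2, ← mul_assoc, he2, one_mul, one_div]
    rw [add_sub_cancel, inv_inv]
  · show eB n / (eB n / (aB n + p.2)) - aB n = p.2
    have h : eB n / (eB n / (aB n + p.2)) = aB n + p.2 := by
      rw [div_div_eq_mul_div, mul_comm, mul_div_assoc, div_self he0, mul_one]
    rw [h]; ring

lemma FB_rightInv {n : ℕ} (hn : 1 ≤ n) {q : ℝ × ℝ} (hq : q ∈ Ioo (0:ℝ) 1 ×ˢ KB n) :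
    FBinv n q ∈ BB n ∧ FB n (FBinv n q) = q := by
  obtain ⟨hu, hv⟩ := hq
  obtain ⟨hu0, hu1⟩ := hu
  obtain ⟨hv1, hv2⟩ := hv
  have ha1 : 1 ≤ aB n := one_le_aB hn
  have hG1 : 1 < G := one_lt_G
  have he2 : eB n * eB n = 1 := eB_mul_self n
  have he0 : eB n ≠ 0 := by rcases eB_cases n with h | h <;> rw [h] <;> norm_num
  have hax : 0 < aB n + eB n * q.1 := by
    rcases eB_cases n with h | h <;> rw [h]
    · linarith
    · have := three_le_aB hn h; linarith
  have hevpos : 0 < eB n * q.2 := by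
    have : (0:ℝ) < (aB n + G)⁻¹ := by positivity
    linarith
  have hv0 : q.2 ≠ 0 := by
    intro h; rw [h, mul_zero] at hevpos; exact lt_irrefl _ hevpos
  have heinv : (eB n)⁻¹ = eB n := by
    rcases eB_cases n with h | h <;> rw [h] <;> norm_num
  have key : eB n / q.2 = (eB n * q.2)⁻¹ := by
    rw [mul_inv, heinv, div_eq_mul_inv, mul_comm]
  have haG2 : 0 < aB n + G - 2 := by linarith
  have hinv1 : aB n + G - 2 < (eB n * q.2)⁻¹ := by
    have := inv_strictAnti₀ hevpos hv2
    rwa [inv_inv] at this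
  have hinv2 : (eB n * q.2)⁻¹ < aB n + G := by
    have := inv_strictAnti₀ (by positivity : (0:ℝ) < (aB n + G)⁻¹) hv1
    rwa [inv_inv] at this
  have hyBB : eB n / q.2 - aB n ∈ Ioo (G - 2) G := by
    rw [key]; constructor <;> [linarith; linarith]
  have hxBB : (aB n + eB n * q.1)⁻¹ ∈ IB n := by
    rw [mem_IB_iff' hn]
    refine ⟨by positivity, ?_⟩
    have : eB n / (aB n + eB n * q.1)⁻¹ - eB n * aB n = q.1 := by
      rw [div_eq_mul_inv, inv_inv, mul_add, ← mul_assoc, he2, one_mul]; ring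
    rw [this]; exact ⟨hu0, hu1⟩
  refine ⟨⟨hxBB, hyBB⟩, ?_⟩
  rw [FB, FBinv]
  apply Prod.ext <;> show _ = _
  · show eB n / (aB n + eB n * q.1)⁻¹ - eB n * aB n = q.1
    rw [div_eq_mul_inv, inv_inv, mul_add, ← mul_assoc, he2, one_mul]; ring
  · show eB n / (aB n + (eB n / q.2 - aB n)) = q.2
    rw [add_sub_cancel]
    rw [div_div_eq_mul_div, mul_comm, mul_div_assoc, div_self he0, mul_one]

lemma FB_injOn {n : ℕ} (hn : 1 ≤ n) : InjOn (FB n) (BB n) := fun p hp q hq h => by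
  rw [← FB_leftInv hn hp, ← FB_leftInv hn hq, h]

lemma FB_image {n : ℕ} (hn : 1 ≤ n) : FB n '' BB n = Ioo (0:ℝ) 1 ×ˢ KB n := by
  apply Subset.antisymm
  · rintro q ⟨p, hp, rfl⟩; exact FB_mapsTo hn hp
  · intro q hq
    obtain ⟨h1, h2⟩ := FB_rightInv hn hq
    exact ⟨FBinv n q, h1, h2⟩

noncomputable def fderB (n : ℕ) (p : ℝ × ℝ) : (ℝ × ℝ) →L[ℝ] (ℝ × ℝ) :=
  (ContinuousLinearMap.smulRight (1 : ℝ →L[ℝ] ℝ) (-(eB n) / p.1 ^ 2)).prodMap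
    (ContinuousLinearMap.smulRight (1 : ℝ →L[ℝ] ℝ) (-(eB n) / (aB n + p.2) ^ 2))

lemma det_prodMap (c d : ℝ) :
    ((ContinuousLinearMap.smulRight (1 : ℝ →L[ℝ] ℝ) c).prodMap
      (ContinuousLinearMap.smulRight (1 : ℝ →L[ℝ] ℝ) d)).det = c * d := by
  have : ((ContinuousLinearMap.smulRight (1 : ℝ →L[ℝ] ℝ) c).prodMap
      (ContinuousLinearMap.smulRight (1 : ℝ →L[ℝ] ℝ) d) : (ℝ×ℝ) →ₗ[ℝ] (ℝ×ℝ)).det = c * d := by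
    rw [← LinearMap.det_toMatrix (Module.Basis.finTwoProd ℝ), Matrix.det_fin_two]
    simp [LinearMap.toMatrix_apply, Module.Basis.finTwoProd_zero, Module.Basis.finTwoProd_one]
  exact this

lemma fderB_det {n : ℕ} (p : ℝ × ℝ) :
    (fderB n p).det = (eB n * eB n) / (p.1 ^ 2 * (aB n + p.2) ^ 2) := by
  rw [fderB, det_prodMap, div_mul_div_comm, neg_mul_neg]

lemma FB_hasFDerivAt {n : ℕ} {p : ℝ × ℝ} (hx : p.1 ≠ 0) (hy : aB n + p.2 ≠ 0) :
    HasFDerivAt (FB n) (fderB n p) p := by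
  have h1 : HasDerivAt (fun x => eB n / x - eB n * aB n) (-(eB n) / p.1 ^ 2) p.1 := by
    simp only [div_eq_mul_inv]
    have := ((hasDerivAt_inv hx).const_mul (eB n)).sub_const (eB n * aB n)
    exact this.congr_deriv (by ring)
  have h2 : HasDerivAt (fun y => eB n / (aB n + y)) (-(eB n) / (aB n + p.2) ^ 2) p.2 := by
    have hbase : HasDerivAt (fun y : ℝ => aB n + y) 1 p.2 := (hasDerivAt_id p.2).const_add _
    simp only [div_eq_mul_inv]
    have := (hbase.inv hy).const_mul (eB n)
    exact this.congr_deriv (by ring)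
  exact h1.hasFDerivAt.prodMap p h2.hasFDerivAt

noncomputable def Dd (p : ℝ × ℝ) : ENNReal := ENNReal.ofReal (((1 + p.1 * p.2) ^ 2)⁻¹)

lemma IB_subset {n : ℕ} (hn : 1 ≤ n) : IB n ⊆ Ioo (0:ℝ) 1 := by
  intro x hx
  have hn' : (1:ℝ) ≤ n := by exact_mod_cast hn
  obtain ⟨h1, h2⟩ := hx
  have h0 : (0:ℝ) < ((n:ℝ)+1)⁻¹ := by positivity
  refine ⟨by linarith, lt_of_lt_of_le h2 ?_⟩
  rw [inv_le_one_iff₀]; right; linarith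

lemma BB_subset {n : ℕ} (hn : 1 ≤ n) : BB n ⊆ Ioo (0:ℝ) 1 ×ˢ Ioo (G - 2) G :=
  prod_mono (IB_subset hn) (Subset.refl _)

lemma one_add_mul_lb {x y : ℝ} (hx : x ∈ Ioo (0:ℝ) 1) (hy : y ∈ Ioo (G-2) G) :
    G - 1 < 1 + x * y := by
  have h1 : 0 < x * (y - (G-2)) := mul_pos hx.1 (by linarith [hy.1])
  have h2 : 0 < (2-G) * (1-x) := mul_pos (by linarith [G_lt_two]) (by linarith [hx.2])
  nlinarith [one_lt_G]

lemma density_id {n : ℕ} (hn : 1 ≤ n) {p : ℝ × ℝ} (hp : p ∈ BB n) :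
    ENNReal.ofReal |(fderB n p).det| * Dd (FB n p) = Dd p := by
  obtain ⟨hx, hy⟩ := hp
  have hx01 := IB_subset hn hx
  have hx0 : 0 < p.1 := hx01.1
  have hay : 0 < aB n + p.2 := aB_add_pos hn hy
  have hxy : 0 < 1 + p.1 * p.2 := lt_trans (by linarith [one_lt_G]) (one_add_mul_lb hx01 hy)
  have he2 : eB n * eB n = 1 := eB_mul_self n
  have he0 : eB n ≠ 0 := by rcases eB_cases n with h | h <;> rw [h] <;> norm_num
  have hdet : (fderB n p).det = (p.1 ^ 2 * (aB n + p.2) ^ 2)⁻¹ := by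
    rw [fderB_det, he2, one_div]
  have hdetpos : (0:ℝ) < (p.1 ^ 2 * (aB n + p.2) ^ 2)⁻¹ := by positivity
  rw [hdet, abs_of_pos hdetpos, Dd, Dd, ← ENNReal.ofReal_mul (le_of_lt hdetpos)]
  congr 1
  have huv : 1 + (FB n p).1 * (FB n p).2 = (1 + p.1 * p.2) / (p.1 * (aB n + p.2)) := by
    show 1 + (eB n / p.1 - eB n * aB n) * (eB n / (aB n + p.2)) = _
    have h1 : eB n / p.1 * (eB n / (aB n + p.2)) = 1 / (p.1 * (aB n + p.2)) := by
      rw [div_mul_div_comm, he2]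
    have h2 : eB n * aB n * (eB n / (aB n + p.2)) = aB n / (aB n + p.2) := by
      rw [mul_div_assoc']
      congr 1
      rw [mul_comm (eB n) (aB n), mul_assoc, he2, mul_one]
    rw [sub_mul, h1, h2]
    field_simp
    ring
  show (p.1 ^ 2 * (aB n + p.2) ^ 2)⁻¹ * ((1 + (FB n p).1 * (FB n p).2) ^ 2)⁻¹ = _
  rw [huv]
  rw [div_pow, ← one_div, ← one_div, one_div_div]
  rw [mul_pow]
  field_simp

lemma aZ_odd (n : ℕ) : Odd (aZ n) := by
  rw [aZ]
  by_cases h : Odd n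
  · simp [h, Int.odd_coe_nat]
  · rw [if_neg h]
    obtain ⟨r, hr⟩ := Nat.not_odd_iff_even.1 h
    exact ⟨(r:ℤ), by rw [hr]; push_cast; ring⟩

lemma KB_info {n : ℕ} (hn : 1 ≤ n) {v : ℝ} (hv : v ∈ KB n) :
    0 < eB n * v ∧ aB n + G - 2 < (eB n * v)⁻¹ ∧ (eB n * v)⁻¹ < aB n + G := by
  obtain ⟨h1, h2⟩ := hv
  have ha1 : 1 ≤ aB n := one_le_aB hn
  have hG1 := one_lt_G
  have hAG : (0:ℝ) < aB n + G - 2 := by linarith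
  have hpos : 0 < eB n * v := lt_trans (by positivity) h1
  refine ⟨hpos, ?_, ?_⟩
  · have := inv_strictAnti₀ hpos h2
    rwa [inv_inv] at this
  · have := inv_strictAnti₀ (by positivity : (0:ℝ) < (aB n + G)⁻¹) h1
    rwa [inv_inv] at this

lemma KB_disjoint {n m : ℕ} (hn : 1 ≤ n) (hm : 1 ≤ m) {v : ℝ}
    (h1 : v ∈ KB n) (h2 : v ∈ KB m) : n = m := by
  obtain ⟨hp1, hl1, hu1⟩ := KB_info hn h1
  obtain ⟨hp2, hl2, hu2⟩ := KB_info hm h2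
  have hee : eB n = eB m := by
    rcases eB_cases n with he | he <;> rcases eB_cases m with he' | he'
    · rw [he, he']
    · exfalso; rw [he, one_mul] at hp1; rw [he', neg_one_mul] at hp2; linarith
    · exfalso; rw [he, neg_one_mul] at hp1; rw [he', one_mul] at hp2; linarith
    · rw [he, he']
  have hinv : (eB n * v)⁻¹ = (eB m * v)⁻¹ := by rw [hee]
  rw [← hinv] at hl2 hu2
  have haa : aB n = aB m := by
    obtain ⟨i, hi⟩ := aZ_odd n
    obtain ⟨j, hj⟩ := aZ_odd m
    have hc1 : aB n - aB m < 2 := by linarith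
    have hc2 : aB m - aB n < 2 := by linarith
    rw [aB, aB, hi, hj] at hc1 hc2 ⊢
    push_cast at hc1 hc2 ⊢
    have : i = j := by
      have e1 : (i:ℝ) - j < 1 := by linarith
      have e2 : (j:ℝ) - i < 1 := by linarith
      have e1' : (i:ℤ) - j < 1 := by exact_mod_cast (by push_cast; linarith : ((i - j : ℤ):ℝ) < 1)
      have e2' : (j:ℤ) - i < 1 := by exact_mod_cast (by push_cast; linarith : ((j - i : ℤ):ℝ) < 1)
      omega
    rw [this]
  -- from aZ n = aZ m and eB n = eB m conclude n = m
  have hZ : aZ n = aZ m := by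
    have := haa
    rw [aB, aB] at this
    exact_mod_cast this
  rcases branch_cases n with ⟨ho1, he1, ha1'⟩ | ⟨ho1, he1, ha1'⟩ <;>
    rcases branch_cases m with ⟨ho2, he2', ha2'⟩ | ⟨ho2, he2', ha2'⟩
  · rw [ha1', ha2'] at haa; exact_mod_cast haa
  · rw [he1, he2'] at hee; norm_num at hee
  · rw [he1, he2'] at hee; norm_num at hee
  · rw [ha1', ha2'] at haa
    have : (n:ℝ) = m := by linarith
    exact_mod_cast this

lemma inv_G_eq : G⁻¹ = G - 1 := by rw [inv_eq_iff_eq_inv, inv_G_sub_one]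
lemma inv_two_sub_G : (2 - G)⁻¹ = 1 + G := by rw [inv_eq_iff_eq_inv, eq_comm, inv_one_add_G]

noncomputable def Cex : Set ℝ :=
  {0} ∪ (⋃ k : ℕ, {((k : ℝ) + G)⁻¹}) ∪ (⋃ k : ℕ, {-(((k : ℝ) + G)⁻¹)})

lemma Cex_countable : Cex.Countable := by
  apply Set.Countable.union
  apply Set.Countable.union
  · exact countable_singleton 0
  · exact countable_iUnion (fun k => countable_singleton _)
  · exact countable_iUnion (fun k => countable_singleton _)

lemma exists_branch {t : ℝ} (ht : G - 1 < t) (hex : ∀ j : ℕ, t ≠ (j : ℝ) + G) :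
    ∃ k : ℤ, 0 ≤ k ∧ (2 * (k:ℝ) + 1) + G - 2 < t ∧ t < (2 * (k:ℝ) + 1) + G := by
  set k := ⌊(t - G + 1) / 2⌋ with hk
  have h1 : (k:ℝ) ≤ (t - G + 1) / 2 := Int.floor_le _
  have h2 : (t - G + 1) / 2 < k + 1 := Int.lt_floor_add_one _
  have hk0 : 0 ≤ k := Int.floor_nonneg.2 (by linarith)
  refine ⟨k, hk0, ?_, by linarith⟩
  have hle : (2 * (k:ℝ) + 1) + G - 2 ≤ t := by linarith
  rcases lt_or_eq_of_le hle with h | h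
  · exact h
  · exfalso
    rcases lt_or_eq_of_le hk0 with hk1 | hk1
    · have hj : ((2 * k - 1).toNat : ℝ) = 2 * (k:ℝ) - 1 := by
        have h0 : (0:ℤ) ≤ 2 * k - 1 := by omega
        rw [show (((2 * k - 1).toNat : ℕ):ℝ) = (((2 * k - 1).toNat : ℤ):ℝ) by push_cast; ring,
          Int.toNat_of_nonneg h0]
        push_cast; ring
      exact hex (2 * k - 1).toNat (by rw [hj]; linarith)
    · rw [← hk1] at h
      push_cast at h
      linarith

lemma IB_cover : Ioo (0:ℝ) 1 ⊆ (⋃ m : ℕ, IB (m + 1)) ∪ (⋃ k : ℕ, {((k : ℝ))⁻¹}) := by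
  rintro x ⟨hx0, hx1⟩
  have hx1' : 1 < 1 / x := by rw [lt_div_iff₀ hx0]; linarith
  set n := ⌊1 / x⌋.toNat with hn
  have hfl : 1 ≤ ⌊1 / x⌋ := by
    rw [Int.le_floor]; exact_mod_cast le_of_lt hx1'
  have hnn : (n:ℤ) = ⌊1 / x⌋ := Int.toNat_of_nonneg (by omega)
  have hn1 : 1 ≤ n := by omega
  have hfl_le : (n:ℝ) ≤ 1 / x := by
    rw [show ((n:ℕ):ℝ) = ((n:ℤ):ℝ) by push_cast; ring, hnn]
    exact Int.floor_le _
  have hfl_lt : 1 / x < n + 1 := by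
    rw [show ((n:ℕ):ℝ) = ((n:ℤ):ℝ) by push_cast; ring, hnn]
    exact Int.lt_floor_add_one _
  rcases lt_or_eq_of_le hfl_le with h | h
  · left
    rw [mem_iUnion]
    refine ⟨n - 1, ?_⟩
    have : n - 1 + 1 = n := by omega
    rw [this, mem_IB_iff hn1]
    exact ⟨hx0, h, hfl_lt⟩
  · right
    rw [mem_iUnion]
    refine ⟨n, ?_⟩
    have : x = ((n:ℝ))⁻¹ := by
      rw [eq_comm, inv_eq_iff_eq_inv, eq_comm, inv_eq_one_div]
      exact h.symm
    simp [this]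

lemma KB_cover : Ioo (G - 2) G ⊆ (⋃ m : ℕ, KB (m + 1)) ∪ Cex := by
  intro v hv
  obtain ⟨hv1, hv2⟩ := hv
  by_cases hC : v ∈ Cex
  · exact Or.inr hC
  left
  have hv0 : v ≠ 0 := by intro h; exact hC (Or.inl (Or.inl h))
  have hG1 := one_lt_G
  rcases lt_or_gt_of_ne hv0 with hneg | hpos
  · -- v < 0, use even branch
    set t := (-v)⁻¹ with htdef
    have hnv : 0 < -v := by linarith
    have hnv2 : -v < 2 - G := by linarith
    have ht : 1 + G < t := by
      rw [htdef, ← inv_two_sub_G]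
      exact inv_strictAnti₀ hnv hnv2
    have hex : ∀ j : ℕ, t ≠ (j : ℝ) + G := by
      intro j hj
      apply hC
      right
      rw [mem_iUnion]
      refine ⟨j, ?_⟩
      have hjG : (0:ℝ) < (j:ℝ) + G := by positivity
      have : -v = ((j:ℝ) + G)⁻¹ := by
        rw [← hj, htdef, inv_inv]
      simp [show v = -(((j:ℝ) + G)⁻¹) by linarith]
    obtain ⟨k, hk0, hbl, hbu⟩ := exists_branch (by linarith) hex
    have hk1 : 1 ≤ k := by
      by_contra hk1
      have : k = 0 := by omega
      rw [this] at hbu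
      push_cast at hbu
      linarith
    set n := 2 * k.toNat with hndef
    have hkt : ((k.toNat : ℕ) : ℝ) = (k : ℝ) := by
      rw [show ((k.toNat : ℕ):ℝ) = ((k.toNat : ℤ):ℝ) by push_cast; ring, Int.toNat_of_nonneg hk0]
    have hnodd : ¬ Odd n := by simp [hndef, Nat.odd_iff]
    have heB : eB n = -1 := by simp [eB, hnodd]
    have haB : aB n = 2 * (k:ℝ) + 1 := by
      rw [aB, aZ, if_neg hnodd]
      push_cast [hndef, hkt]
      ring
    rw [mem_iUnion]
    refine ⟨2 * k.toNat - 1, ?_⟩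
    have hidx : 2 * k.toNat - 1 + 1 = n := by
      have : 1 ≤ k.toNat := by omega
      omega
    rw [hidx]
    show eB n * v ∈ Ioo (aB n + G)⁻¹ (aB n + G - 2)⁻¹
    rw [heB, haB, neg_one_mul]
    have hA2 : (0:ℝ) < 2 * (k:ℝ) + 1 + G - 2 := by
      have : (1:ℝ) ≤ k := by exact_mod_cast hk1
      linarith
    have hvt : -v = t⁻¹ := by rw [htdef, inv_inv]
    rw [hvt]
    constructor
    · exact inv_strictAnti₀ (by linarith) hbu
    · exact inv_strictAnti₀ hA2 hbl
  · -- v > 0, use odd branch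
    set t := v⁻¹ with htdef
    have ht : G - 1 < t := by
      rw [htdef, ← inv_G_eq]
      exact inv_strictAnti₀ hpos hv2
    have hex : ∀ j : ℕ, t ≠ (j : ℝ) + G := by
      intro j hj
      apply hC
      left; right
      rw [mem_iUnion]
      refine ⟨j, ?_⟩
      simp [show v = ((j:ℝ) + G)⁻¹ by rw [← hj, htdef, inv_inv]]
    obtain ⟨k, hk0, hbl, hbu⟩ := exists_branch ht hex
    set n := 2 * k.toNat + 1 with hndef
    have hkt : ((k.toNat : ℕ) : ℝ) = (k : ℝ) := by
      rw [show ((k.toNat : ℕ):ℝ) = ((k.toNat : ℤ):ℝ) by push_cast; ring, Int.toNat_of_nonneg hk0]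
    have hnodd : Odd n := by simp [hndef, Nat.odd_iff]
    have heB : eB n = 1 := by simp [eB, hnodd]
    have haB : aB n = 2 * (k:ℝ) + 1 := by
      rw [aB, aZ, if_pos hnodd]
      push_cast [hndef, hkt]
      ring
    rw [mem_iUnion]
    refine ⟨2 * k.toNat, ?_⟩
    rw [show 2 * k.toNat + 1 = n from rfl]
    show eB n * v ∈ Ioo (aB n + G)⁻¹ (aB n + G - 2)⁻¹
    rw [heB, haB, one_mul]
    have hA2 : (0:ℝ) < 2 * (k:ℝ) + 1 + G - 2 := by
      have : (0:ℝ) ≤ k := by exact_mod_cast hk0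
      linarith
    have hvt : v = t⁻¹ := by rw [htdef, inv_inv]
    rw [hvt]
    constructor
    · exact inv_strictAnti₀ (by linarith) hbu
    · exact inv_strictAnti₀ hA2 hbl

lemma measurable_one_div : Measurable fun x : ℝ => 1 / x := by
  simpa [one_div] using (measurable_inv : Measurable fun x : ℝ => x⁻¹)

lemma measurable_floor_one_div : Measurable fun x : ℝ => ⌊1 / x⌋ :=
  Int.measurable_floor.comp measurable_one_div

lemma measurable_aO : Measurable aO := by
  have : aO = (fun k : ℤ => if Odd k then k else k + 1) ∘ (fun x : ℝ => ⌊1 / x⌋) := rfl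
  rw [this]
  exact (measurable_from_top).comp measurable_floor_one_div

lemma measurable_aOR : Measurable fun x : ℝ => ((aO x : ℤ) : ℝ) :=
  (measurable_from_top (f := fun k : ℤ => ((k : ℤ) : ℝ))).comp measurable_aO

lemma measurable_epsO : Measurable epsO := by
  have h : MeasurableSet {x : ℝ | 0 < 1 / x - (aO x : ℝ)} := by
    have : Measurable fun x : ℝ => 1 / x - (aO x : ℝ) := measurable_one_div.sub measurable_aOR
    exact measurableSet_lt measurable_const this
  exact Measurable.ite h measurable_const measurable_const

lemma measurable_TO : Measurable TO :=
  (measurable_one_div.sub measurable_aOR).abs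

lemma measurable_barTO : Measurable barTO := by
  apply Measurable.prodMk
  · exact measurable_TO.comp measurable_fst
  · exact (measurable_epsO.comp measurable_fst).div
      ((measurable_aOR.comp measurable_fst).add measurable_snd)

lemma measurable_FB (n : ℕ) : Measurable (FB n) := by
  have h1 : Measurable fun p : ℝ × ℝ => eB n / p.1 - eB n * aB n := by
    simp only [div_eq_mul_inv]
    exact ((measurable_inv.comp measurable_fst).const_mul (eB n)).sub measurable_const
  have h2 : Measurable fun p : ℝ × ℝ => eB n / (aB n + p.2) := by
    simp only [div_eq_mul_inv]
    exact ((measurable_const.add measurable_snd).inv).const_mul (eB n)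
  exact h1.prodMk h2

lemma measurable_Dd : Measurable Dd :=
  ENNReal.measurable_ofReal.comp
    ((((measurable_const.add (measurable_fst.mul measurable_snd)).pow measurable_const)).inv)

lemma measurableSet_KB (n : ℕ) : MeasurableSet (KB n) :=
  (measurable_id.const_mul (eB n) : Measurable fun v : ℝ => eB n * v) measurableSet_Ioo

lemma measurableSet_BB (n : ℕ) : MeasurableSet (BB n) :=
  (measurableSet_Ioo.prod measurableSet_Ioo)

lemma null_prod_left {s : Set ℝ} (hs : s.Countable) : volume (s ×ˢ (univ : Set ℝ)) = 0 := by
  rw [Measure.volume_eq_prod, Measure.prod_prod, hs.measure_zero, zero_mul]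

lemma null_prod_right {s : Set ℝ} (hs : s.Countable) : volume ((univ : Set ℝ) ×ˢ s) = 0 := by
  rw [Measure.volume_eq_prod, Measure.prod_prod, hs.measure_zero, mul_zero]

lemma IB_disj {n m : ℕ} (hn : 1 ≤ n) (hm : 1 ≤ m) {x : ℝ}
    (h1 : x ∈ IB n) (h2 : x ∈ IB m) : n = m := by
  have e1 := floor_IB hn h1
  have e2 := floor_IB hm h2
  rw [e1] at e2
  exact_mod_cast e2

lemma muBarO_apply {S : Set (ℝ × ℝ)} (hS : MeasurableSet S) :
    muBarO S = ∫⁻ p in S ∩ (Ioo (0:ℝ) 1 ×ˢ Ioo (G - 2) G), Dd p := by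
  rw [muBarO, withDensity_apply _ hS, Measure.restrict_restrict hS]
  rfl

theorem muBarO_finite_and_invariant_aux :
    IsFiniteMeasure muBarO ∧
    ∀ E : Set (ℝ × ℝ), MeasurableSet E → E ⊆ Ioo (0 : ℝ) 1 ×ˢ Ioo (G - 2) G →
      muBarO (barTO ⁻¹' E) = muBarO E := by
  have hG1 := one_lt_G
  set Ω : Set (ℝ × ℝ) := Ioo (0:ℝ) 1 ×ˢ Ioo (G - 2) G with hΩdef
  constructor
  · -- finiteness
    constructor
    have happ := muBarO_apply MeasurableSet.univ
    rw [univ_inter] at happ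
    rw [happ]
    have hb : ∀ p ∈ Ω, Dd p ≤ ENNReal.ofReal (((G - 1) ^ 2)⁻¹) := by
      rintro p ⟨hx, hy⟩
      apply ENNReal.ofReal_le_ofReal
      have hlb := one_add_mul_lb hx hy
      have h0 : (0:ℝ) < G - 1 := by linarith
      apply inv_anti₀ (by positivity) (by nlinarith)
    calc ∫⁻ p in Ω, Dd p ∂volume
        ≤ ∫⁻ _ in Ω, ENNReal.ofReal (((G - 1) ^ 2)⁻¹) ∂volume :=
          setLIntegral_mono measurable_const hb
      _ = ENNReal.ofReal (((G - 1) ^ 2)⁻¹) * volume Ω := setLIntegral_const _ _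
      _ < ⊤ := by
          have : volume Ω = ENNReal.ofReal 1 * ENNReal.ofReal 2 := by
            rw [hΩdef, Measure.volume_eq_prod, Measure.prod_prod, Real.volume_Ioo,
              Real.volume_Ioo]
            norm_num
          rw [this]
          exact ENNReal.mul_lt_top ENNReal.ofReal_lt_top
            (ENNReal.mul_lt_top ENNReal.ofReal_lt_top ENNReal.ofReal_lt_top)
  · -- invariance
    intro E hE hEsub
    have hTm : MeasurableSet (barTO ⁻¹' E) := measurable_barTO hE
    rw [muBarO_apply hTm, muBarO_apply hE, inter_eq_self_of_subset_left hEsub]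
    set A : ℕ → Set (ℝ × ℝ) := fun m => barTO ⁻¹' E ∩ BB (m + 1) with hAdef
    have hAm : ∀ m, MeasurableSet (A m) := fun m => hTm.inter (measurableSet_BB _)
    have hAdis : Pairwise (Function.onFun Disjoint A) := by
      intro i j hij
      rw [Function.onFun, Set.disjoint_left]
      rintro p ⟨_, hpi⟩ ⟨_, hpj⟩
      exact hij (by simpa using IB_disj (Nat.le_add_left 1 i) (Nat.le_add_left 1 j) hpi.1 hpj.1)
    have hae : (barTO ⁻¹' E ∩ Ω : Set (ℝ × ℝ)) =ᵐ[volume] ⋃ m, A m := by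
      rw [ae_eq_set]
      constructor
      · apply measure_mono_null (t := (⋃ k : ℕ, {((k:ℝ))⁻¹}) ×ˢ (univ : Set ℝ))
        · rintro p ⟨⟨hpE, hpΩ⟩, hpU⟩
          rcases IB_cover hpΩ.1 with h | h
          · exfalso
            rw [mem_iUnion] at h
            obtain ⟨m, hm⟩ := h
            exact hpU (mem_iUnion.2 ⟨m, hpE, hm, hpΩ.2⟩)
          · exact ⟨h, mem_univ _⟩
        · exact null_prod_left (countable_iUnion fun k => countable_singleton _)
      · have hsub : (⋃ m, A m) ⊆ barTO ⁻¹' E ∩ Ω := by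
          rintro p hp
          rw [mem_iUnion] at hp
          obtain ⟨m, hpE, hpB⟩ := hp
          exact ⟨hpE, BB_subset (Nat.le_add_left 1 m) hpB⟩
        rw [diff_eq_empty.mpr hsub]
        exact measure_empty
    rw [setLIntegral_congr hae, lintegral_iUnion hAm hAdis]
    have hterm : ∀ m : ℕ, ∫⁻ p in A m, Dd p ∂volume
        = ∫⁻ p in E ∩ (Ioo (0:ℝ) 1 ×ˢ KB (m + 1)), Dd p ∂volume := by
      intro m
      set n := m + 1 with hndef
      have hn : 1 ≤ n := Nat.le_add_left 1 m
      have hAeq : A m = FB n ⁻¹' E ∩ BB n := by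
        ext p
        simp only [hAdef, mem_inter_iff, mem_preimage]
        constructor
        · rintro ⟨h1, h2⟩; exact ⟨by rwa [← barTO_IB hn h2.1], h2⟩
        · rintro ⟨h1, h2⟩; exact ⟨by rwa [barTO_IB hn h2.1], h2⟩
      set s : Set (ℝ × ℝ) := FB n ⁻¹' E ∩ BB n with hsdef
      have hs : MeasurableSet s := ((measurable_FB n) hE).inter (measurableSet_BB n)
      have hder : ∀ p ∈ s, HasFDerivWithinAt (FB n) (fderB n p) s p := by
        rintro p ⟨_, hpB⟩
        have hx0 : p.1 ≠ 0 := ne_of_gt (IB_subset hn hpB.1).1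
        have hay : aB n + p.2 ≠ 0 := ne_of_gt (aB_add_pos hn hpB.2)
        exact (FB_hasFDerivAt hx0 hay).hasFDerivWithinAt
      have hinj : InjOn (FB n) s := (FB_injOn hn).mono inter_subset_right
      calc ∫⁻ p in A m, Dd p ∂volume = ∫⁻ p in s, Dd p ∂volume := by rw [hAeq]
        _ = ∫⁻ p in s, ENNReal.ofReal |(fderB n p).det| * Dd (FB n p) ∂volume :=
            (setLIntegral_congr_fun hs (fun p hp => (density_id hn hp.2).symm))
        _ = ∫⁻ p in FB n '' s, Dd p ∂volume :=
            (lintegral_image_eq_lintegral_abs_det_fderiv_mul volume hs hder hinj Dd).symm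
        _ = ∫⁻ p in E ∩ (Ioo (0:ℝ) 1 ×ˢ KB n), Dd p ∂volume := by
            rw [hsdef, image_preimage_inter, FB_image hn]
    rw [tsum_congr hterm]
    set Bs : ℕ → Set (ℝ × ℝ) := fun m => E ∩ (Ioo (0:ℝ) 1 ×ˢ KB (m + 1)) with hBdef
    have hBm : ∀ m, MeasurableSet (Bs m) :=
      fun m => hE.inter (measurableSet_Ioo.prod (measurableSet_KB _))
    have hBdis : Pairwise (Function.onFun Disjoint Bs) := by
      intro i j hij
      rw [Function.onFun, Set.disjoint_left]
      rintro p ⟨_, hpi⟩ ⟨_, hpj⟩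
      exact hij (by
        simpa using KB_disjoint (Nat.le_add_left 1 i) (Nat.le_add_left 1 j) hpi.2 hpj.2)
    rw [← lintegral_iUnion hBm hBdis]
    apply setLIntegral_congr
    rw [ae_eq_set]
    constructor
    · have hsub : (⋃ m, Bs m) ⊆ E := by
        rintro p hp
        rw [mem_iUnion] at hp
        exact hp.choose_spec.1
      rw [diff_eq_empty.mpr hsub]
      exact measure_empty
    · apply measure_mono_null (t := (univ : Set ℝ) ×ˢ Cex)
      · rintro p ⟨hpE, hpU⟩
        have hpΩ : p ∈ Ω := hEsub hpE
        rcases KB_cover hpΩ.2 with h | h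
        · exfalso
          rw [mem_iUnion] at h
          obtain ⟨m, hm⟩ := h
          exact hpU (mem_iUnion.2 ⟨m, hpE, hpΩ.1, hm⟩)
        · exact ⟨mem_univ _, h⟩
      · exact null_prod_right Cex_countable

/-- `μ̄_o` is a finite `T̄_o`-invariant measure on `Ω_o`. -/
theorem muBarO_finite_and_invariant :
    IsFiniteMeasure muBarO ∧
    ∀ E : Set (ℝ × ℝ), MeasurableSet E → E ⊆ Ioo (0 : ℝ) 1 ×ˢ Ioo (G - 2) G →
      muBarO (barTO ⁻¹' E) = muBarO E := muBarO_finite_and_invariant_aux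
end

section
/- The Borel measure ν_o on (G−2, G) with density v ↦ 1/(1+v) with respect to Lebesgue measure is finite and τ_o-invariant: ν_o(τ_o⁻¹(A)) = ν_o(A) for every Borel set A ⊆ (G−2,G). -/
open Set MeasureTheory

/-- `b_o(y)`: the unique odd integer in the interval `[1/|y| − G, 1/|y| − G + 2]`,
namely the smallest odd integer `≥ 1/|y| − G`. -/
noncomputable def bO (y : ℝ) : ℤ :=
  if Odd ⌈1 / |y| - G⌉ then ⌈1 / |y| - G⌉ else ⌈1 / |y| - G⌉ + 1

/-- The grotesque-continued-fraction Gauss map `τ_o(y) = 1/|y| − b_o(y)`. -/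
noncomputable def tauO (y : ℝ) : ℝ := 1 / |y| - (bO y : ℝ)

/-- The measure `ν_o` on `(G−2, G)` with density `v ↦ 1/(1+v)` with respect to
Lebesgue measure. -/
noncomputable def nuO : Measure ℝ :=
  ((volume : Measure ℝ).restrict (Ioo (G - 2) G)).withDensity
    (fun v => ENNReal.ofReal (1 / (1 + v)))

lemma G_gt : 1.6 < G := by
  have : (2.2:ℝ) < Real.sqrt 5 := by
    have := Real.lt_sqrt (x := 2.2) (y := 5) (by norm_num)
    rw [this]; norm_num
  simp only [G]; linarith

lemma G_lt : G < 1.7 := by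
  have : Real.sqrt 5 < 2.4 := by
    have := Real.sqrt_lt' (x := 5) (y := 2.4) (by norm_num)
    rw [this]; norm_num
  simp only [G]; linarith

lemma Ginv : (G-1)⁻¹ = G := inv_eq_of_mul_eq_one_right (by nlinarith [G_sq])
lemma G1inv : (G+1)⁻¹ = 2-G := inv_eq_of_mul_eq_one_right (by nlinarith [G_sq])

/-! ### Basic facts about `bO` and `tauO` -/

lemma bO_odd (y : ℝ) : Odd (bO y) := by
  unfold bO
  split_ifs with h
  · exact h
  · rcases Int.even_or_odd ⌈1 / |y| - G⌉ with he | ho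
    · exact he.add_one
    · exact absurd ho h

lemma bO_eq {x : ℝ} (hx : x ∈ Ioo (G-2) G) {b : ℤ} (hb : Odd b) {y : ℝ}
    (hy : 1/|y| = b + x) : bO y = b := by
  obtain ⟨hx1, hx2⟩ := hx
  have hcle : ⌈1/|y| - G⌉ ≤ b := Int.ceil_le.mpr (by rw [hy]; linarith)
  have hclt : b - 2 < ⌈1/|y| - G⌉ := Int.lt_ceil.mpr (by push_cast; rw [hy]; linarith)
  have hcases : ⌈1/|y| - G⌉ = b - 1 ∨ ⌈1/|y| - G⌉ = b := by omega
  unfold bO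
  rcases hcases with hc | hc <;> rw [hc] <;> split_ifs with h <;>
    first
      | omega
      | (rcases hb with ⟨m, hm⟩; rcases h with ⟨m', hm'⟩; omega)
      | exact absurd hb h

lemma tauO_eq {x : ℝ} (hx : x ∈ Ioo (G-2) G) {b : ℤ} (hb : Odd b) {y : ℝ}
    (hy : 1/|y| = b + x) : tauO y = x := by
  unfold tauO
  rw [bO_eq hx hb hy, hy]; ring

lemma bO_ge {y : ℝ} {n : ℤ} (h : (n : ℝ) - 1 < 1/|y| - G) : n ≤ bO y := by
  have h1 : n - 1 < ⌈1/|y| - G⌉ := Int.lt_ceil.mpr (by push_cast; linarith)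
  have h2 := bO_odd y
  unfold bO at *; split_ifs <;> omega

lemma one_div_abs_eq (y : ℝ) : 1/|y| = (bO y : ℝ) + tauO y := by unfold tauO; ring

/-! ### Measurability -/

lemma measurable_one_div_abs : Measurable fun y : ℝ => 1 / |y| := by
  simp only [one_div]; exact measurable_abs.inv

lemma measurable_bO : Measurable bO := by
  have : bO = (fun n : ℤ => if Odd n then n else n + 1) ∘ (fun y : ℝ => ⌈1 / |y| - G⌉) := rfl
  rw [this]
  exact measurable_from_top.comp ((measurable_one_div_abs.sub measurable_const).ceil)

lemma measurable_tauO : Measurable tauO := by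
  unfold tauO
  exact measurable_one_div_abs.sub
    ((measurable_from_top (f := fun n : ℤ => (n : ℝ))).comp measurable_bO)

/-! ### Branch sets -/

/-- positive branch set -/
def SP (A : Set ℝ) (k : ℕ) : Set ℝ :=
  {y | 1/y - (2*(k:ℝ)+1) ∈ A} ∩ Ioo ((2*(k:ℝ)+1+G)⁻¹) ((2*(k:ℝ)+1+G-2)⁻¹)

/-- negative branch set -/
def SN (A : Set ℝ) (k : ℕ) : Set ℝ :=
  {y | -(1/y) - (2*(k:ℝ)+3) ∈ A} ∩ Ioo (-(2*(k:ℝ)+3+G-2)⁻¹) (-(2*(k:ℝ)+3+G)⁻¹)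

lemma SP_meas {A : Set ℝ} (hAm : MeasurableSet A) (k : ℕ) : MeasurableSet (SP A k) := by
  have hm : Measurable fun y : ℝ => 1/y - (2*(k:ℝ)+1) := by
    simp only [one_div]; exact measurable_inv.sub measurable_const
  exact (hm hAm).inter measurableSet_Ioo

lemma SN_meas {A : Set ℝ} (hAm : MeasurableSet A) (k : ℕ) : MeasurableSet (SN A k) := by
  have hm : Measurable fun y : ℝ => -(1/y) - (2*(k:ℝ)+3) := by
    simp only [one_div]; exact measurable_inv.neg.sub measurable_const
  exact (hm hAm).inter measurableSet_Ioo

lemma SP_eq_image {A : Set ℝ} (hA : A ⊆ Ioo (G-2) G) (k : ℕ) :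
    SP A k = (fun x => (2*(k:ℝ)+1+x)⁻¹) '' A := by
  have hk0 : (0:ℝ) ≤ 2*(k:ℝ) := by positivity
  have hG := G_gt
  ext y
  constructor
  · rintro ⟨hy1, hy2, hy3⟩
    have hypos : 0 < y := lt_trans (inv_pos.mpr (by linarith)) hy2
    refine ⟨1/y - (2*(k:ℝ)+1), hy1, ?_⟩
    show (2*(k:ℝ)+1+(1/y - (2*(k:ℝ)+1)))⁻¹ = y
    have : 2*(k:ℝ)+1+(1/y - (2*(k:ℝ)+1)) = 1/y := by ring
    rw [this, one_div, inv_inv]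
  · rintro ⟨x, hx, rfl⟩
    obtain ⟨hx1, hx2⟩ := hA hx
    have hd : (0:ℝ) < 2*(k:ℝ)+1+x := by linarith
    have h1y : 1/(2*(k:ℝ)+1+x)⁻¹ = 2*(k:ℝ)+1+x := by
      rw [one_div, inv_inv]
    refine ⟨?_, ?_, ?_⟩
    · show 1/(2*(k:ℝ)+1+x)⁻¹ - (2*(k:ℝ)+1) ∈ A
      rw [h1y]; simpa using hx
    · apply inv_strictAnti₀ hd; linarith
    · apply inv_strictAnti₀ (by linarith) (by linarith)

lemma SN_eq_image {A : Set ℝ} (hA : A ⊆ Ioo (G-2) G) (k : ℕ) :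
    SN A k = (fun x => -(2*(k:ℝ)+3+x)⁻¹) '' A := by
  have hk0 : (0:ℝ) ≤ 2*(k:ℝ) := by positivity
  have hG := G_gt
  ext y
  constructor
  · rintro ⟨hy1, hy2, hy3⟩
    have hd : (0:ℝ) < 2*(k:ℝ)+3+G := by linarith
    have hyneg : y < 0 := lt_trans hy3 (neg_lt_zero.mpr (inv_pos.mpr hd))
    refine ⟨-(1/y) - (2*(k:ℝ)+3), hy1, ?_⟩
    show -(2*(k:ℝ)+3+(-(1/y) - (2*(k:ℝ)+3)))⁻¹ = y
    have : 2*(k:ℝ)+3+(-(1/y) - (2*(k:ℝ)+3)) = -(1/y) := by ring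
    rw [this]; rw [one_div, inv_neg, inv_inv, neg_neg]
  · rintro ⟨x, hx, rfl⟩
    obtain ⟨hx1, hx2⟩ := hA hx
    have hd : (0:ℝ) < 2*(k:ℝ)+3+x := by linarith
    have h1y : -(1/(-(2*(k:ℝ)+3+x)⁻¹)) = 2*(k:ℝ)+3+x := by
      rw [one_div, ← inv_neg, neg_neg, inv_inv]
    refine ⟨?_, ?_, ?_⟩
    · show -(1/(-(2*(k:ℝ)+3+x)⁻¹)) - (2*(k:ℝ)+3) ∈ A
      rw [h1y]; simpa using hx
    · rw [neg_lt_neg_iff]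
      apply inv_strictAnti₀ (by linarith : (0:ℝ) < 2*(k:ℝ)+3+G-2) (by linarith)
    · rw [neg_lt_neg_iff]
      apply inv_strictAnti₀ hd; linarith

lemma union_SP {A : Set ℝ} (hA : A ⊆ Ioo (G-2) G) :
    tauO ⁻¹' A ∩ Ioo 0 G = ⋃ k, SP A k := by
  have hG := G_gt
  have hG' := G_lt
  apply Subset.antisymm
  · rintro y ⟨hyA, hy0, hyG⟩
    have habs : |y| = y := abs_of_pos hy0
    have h1y : 1/G < 1/y := one_div_lt_one_div_of_lt hy0 hyG
    have hGinv : 1/G = G - 1 := by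
      rw [one_div]; exact inv_eq_of_mul_eq_one_right (by nlinarith [G_sq])
    have h3 : G - 1 < 1/y := by rw [← hGinv]; exact h1y
    have hb0 : (0:ℤ) ≤ bO y := bO_ge (by rw [habs]; push_cast; linarith)
    obtain ⟨m, hm⟩ := bO_odd y
    have hm0 : 0 ≤ m := by omega
    set k := m.toNat with hk
    have hkm : (k:ℤ) = m := Int.toNat_of_nonneg hm0
    have hbcast : ((bO y : ℤ) : ℝ) = 2*(k:ℝ)+1 := by
      have : bO y = 2*(k:ℤ)+1 := by omega
      rw [this]; push_cast; ring
    have htA := hA hyA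
    rw [mem_iUnion]
    refine ⟨k, ?_⟩
    rw [SP_eq_image hA]
    refine ⟨tauO y, hyA, ?_⟩
    have h2 : 2*(k:ℝ)+1+tauO y = 1/y := by
      have h4 := one_div_abs_eq y
      rw [habs] at h4
      rw [h4, hbcast]
    show (2*(k:ℝ)+1+tauO y)⁻¹ = y
    rw [h2, one_div, inv_inv]
  · rw [iUnion_subset_iff]
    intro k
    rw [SP_eq_image hA]
    rintro y ⟨x, hx, rfl⟩
    obtain ⟨hx1, hx2⟩ := hA hx
    have hk0 : (0:ℝ) ≤ 2*(k:ℝ) := by positivity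
    have hd : (0:ℝ) < 2*(k:ℝ)+1+x := by linarith
    have hy0 : 0 < (2*(k:ℝ)+1+x)⁻¹ := inv_pos.mpr hd
    have habs : |(2*(k:ℝ)+1+x)⁻¹| = (2*(k:ℝ)+1+x)⁻¹ := abs_of_pos hy0
    have hinv : 1/|(2*(k:ℝ)+1+x)⁻¹| = ((2*(k:ℤ)+1 : ℤ) : ℝ) + x := by
      rw [habs, one_div, inv_inv]; push_cast; ring
    have hodd : Odd (2*(k:ℤ)+1) := ⟨k, by ring⟩
    refine ⟨?_, hy0, ?_⟩
    · show tauO _ ∈ A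
      rw [tauO_eq (hA hx) hodd hinv]; exact hx
    · calc (2*(k:ℝ)+1+x)⁻¹ < (G-1)⁻¹ := by
            apply inv_strictAnti₀ (by linarith); linarith
        _ = G := Ginv

lemma union_SN {A : Set ℝ} (hA : A ⊆ Ioo (G-2) G) :
    tauO ⁻¹' A ∩ Ioo (G-2) 0 = ⋃ k, SN A k := by
  have hG := G_gt
  have hG' := G_lt
  apply Subset.antisymm
  · rintro y ⟨hyA, hyl, hy0⟩
    have habs : |y| = -y := abs_of_neg hy0
    have hyn : 0 < -y := by linarith
    have h1y : 1/(2-G) < 1/(-y) := one_div_lt_one_div_of_lt hyn (by linarith)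
    have hG2inv : 1/(2-G) = G + 1 := by
      rw [one_div, ← G1inv, inv_inv]
    have h3 : G + 1 < 1/(-y) := by rw [← hG2inv]; exact h1y
    have hb2 : (2:ℤ) ≤ bO y := bO_ge (by rw [habs]; push_cast; linarith)
    obtain ⟨m, hm⟩ := bO_odd y
    have hm1 : 1 ≤ m := by omega
    set k := (m-1).toNat with hk
    have hkm : (k:ℤ) = m - 1 := Int.toNat_of_nonneg (by omega)
    have hbcast : ((bO y : ℤ) : ℝ) = 2*(k:ℝ)+3 := by
      have : bO y = 2*(k:ℤ)+3 := by omega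
      rw [this]; push_cast; ring
    rw [mem_iUnion]
    refine ⟨k, ?_⟩
    rw [SN_eq_image hA]
    refine ⟨tauO y, hyA, ?_⟩
    have h2 : 2*(k:ℝ)+3+tauO y = 1/(-y) := by
      have h4 := one_div_abs_eq y
      rw [habs] at h4
      rw [h4, hbcast]
    show -(2*(k:ℝ)+3+tauO y)⁻¹ = y
    rw [h2, one_div, inv_inv, neg_neg]
  · rw [iUnion_subset_iff]
    intro k
    rw [SN_eq_image hA]
    rintro y ⟨x, hx, rfl⟩
    obtain ⟨hx1, hx2⟩ := hA hx
    have hk0 : (0:ℝ) ≤ 2*(k:ℝ) := by positivity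
    have hd : (0:ℝ) < 2*(k:ℝ)+3+x := by linarith
    have hy0 : -(2*(k:ℝ)+3+x)⁻¹ < 0 := neg_lt_zero.mpr (inv_pos.mpr hd)
    have habs : |(-(2*(k:ℝ)+3+x)⁻¹)| = (2*(k:ℝ)+3+x)⁻¹ := by
      rw [abs_of_neg hy0, neg_neg]
    have hinv : 1/|(-(2*(k:ℝ)+3+x)⁻¹)| = ((2*(k:ℤ)+3 : ℤ) : ℝ) + x := by
      rw [habs, one_div, inv_inv]; push_cast; ring
    have hodd : Odd (2*(k:ℤ)+3) := ⟨k+1, by ring⟩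
    refine ⟨?_, ?_, hy0⟩
    · show tauO _ ∈ A
      rw [tauO_eq (hA hx) hodd hinv]; exact hx
    · have h1 : (2*(k:ℝ)+3+x)⁻¹ < (G+1)⁻¹ := by
        apply inv_strictAnti₀ (by linarith); linarith
      rw [G1inv] at h1
      linarith

/-! ### Disjointness -/

lemma SP_disj_lt {A : Set ℝ} {j k : ℕ} (h : j < k) : Disjoint (SP A j) (SP A k) := by
  have hG := G_gt
  rw [Set.disjoint_left]
  rintro y ⟨-, hj1, hj2⟩ ⟨-, hk1, hk2⟩
  have hjk : (j:ℝ) + 1 ≤ (k:ℝ) := by exact_mod_cast h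
  have hj0 : (0:ℝ) ≤ (j:ℝ) := Nat.cast_nonneg j
  have h1 : (2*(k:ℝ)+1+G-2)⁻¹ ≤ (2*(j:ℝ)+1+G)⁻¹ :=
    inv_anti₀ (by linarith) (by linarith)
  linarith

lemma SN_disj_lt {A : Set ℝ} {j k : ℕ} (h : j < k) : Disjoint (SN A j) (SN A k) := by
  have hG := G_gt
  rw [Set.disjoint_left]
  rintro y ⟨-, hj1, hj2⟩ ⟨-, hk1, hk2⟩
  have hjk : (j:ℝ) + 1 ≤ (k:ℝ) := by exact_mod_cast h
  have hj0 : (0:ℝ) ≤ (j:ℝ) := Nat.cast_nonneg j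
  have h1 : (2*(k:ℝ)+3+G-2)⁻¹ ≤ (2*(j:ℝ)+3+G)⁻¹ :=
    inv_anti₀ (by linarith) (by linarith)
  have h2 : -(2*(j:ℝ)+3+G)⁻¹ ≤ -(2*(k:ℝ)+3+G-2)⁻¹ := by linarith
  linarith

lemma SP_pairwise (A : Set ℝ) : Pairwise (Function.onFun Disjoint fun k => SP A k) := by
  intro j k hjk
  rcases hjk.lt_or_gt with h | h
  · exact SP_disj_lt h
  · exact (SP_disj_lt h).symm

lemma SN_pairwise (A : Set ℝ) : Pairwise (Function.onFun Disjoint fun k => SN A k) := by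
  intro j k hjk
  rcases hjk.lt_or_gt with h | h
  · exact SN_disj_lt h
  · exact (SN_disj_lt h).symm

/-! ### Change of variables -/

lemma lintegral_image_1d {s : Set ℝ} {f f' : ℝ → ℝ} (hs : MeasurableSet s)
    (hf' : ∀ x ∈ s, HasDerivWithinAt f (f' x) s x) (hf : InjOn f s) (g : ℝ → ENNReal) :
    ∫⁻ x in f '' s, g x = ∫⁻ x in s, ENNReal.ofReal |f' x| * g (f x) := by
  simpa only [ContinuousLinearMap.det_toSpanSingleton] using
    lintegral_image_eq_lintegral_abs_det_fderiv_mul volume hs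
      (fun x hx => (hf' x hx).hasFDerivWithinAt) hf g

lemma nuO_apply {S : Set ℝ} (hS : MeasurableSet S) (hsub : S ⊆ Ioo (G-2) G) :
    nuO S = ∫⁻ y in S, ENNReal.ofReal (1/(1+y)) := by
  rw [nuO, withDensity_apply _ hS, Measure.restrict_restrict hS,
    inter_eq_self_of_subset_left hsub]

lemma nuO_image_P {A : Set ℝ} (hAm : MeasurableSet A) (hA : A ⊆ Ioo (G-2) G) (k : ℕ)
    (hSm : MeasurableSet ((fun x => (2*(k:ℝ)+1+x)⁻¹) '' A))
    (hSsub : (fun x => (2*(k:ℝ)+1+x)⁻¹) '' A ⊆ Ioo (G-2) G) :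
    nuO ((fun x => (2*(k:ℝ)+1+x)⁻¹) '' A)
      = ∫⁻ x in A, ENNReal.ofReal (1/((2*(k:ℝ)+1+x)*(2*(k:ℝ)+2+x))) := by
  have hG := G_gt
  have hd : ∀ x ∈ A, (0:ℝ) < 2*(k:ℝ)+1+x := by
    intro x hx
    obtain ⟨h1, h2⟩ := hA hx
    have : (0:ℝ) ≤ (k:ℝ) := Nat.cast_nonneg k
    linarith
  rw [nuO_apply hSm hSsub]
  rw [lintegral_image_1d hAm
    (f' := fun x => -1/(2*(k:ℝ)+1+x)^2)
    (fun x hx => by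
      have h := (((hasDerivAt_id x).const_add (2*(k:ℝ)+1)).inv (ne_of_gt (hd x hx)))
      simpa [Pi.inv_def] using h.hasDerivWithinAt)
    (fun a ra b rb hab => by
      have := inv_injective hab
      linarith [this])
    (fun y => ENNReal.ofReal (1/(1+y)))]
  apply setLIntegral_congr_fun hAm
  intro x hx
  dsimp only
  have h1 := hd x hx
  rw [← ENNReal.ofReal_mul (abs_nonneg _)]
  congr 1
  have h2 : (0:ℝ) < 2*(k:ℝ)+2+x := by linarith
  have h3 : (0:ℝ) < 1 + (2*(k:ℝ)+1+x)⁻¹ := by positivity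
  rw [abs_div, abs_neg, abs_one, abs_of_pos (by positivity)]
  rw [div_mul_div_comm, one_mul, div_eq_div_iff (by positivity) (by positivity)]
  field_simp
  ring

lemma nuO_image_N {A : Set ℝ} (hAm : MeasurableSet A) (hA : A ⊆ Ioo (G-2) G) (k : ℕ)
    (hSm : MeasurableSet ((fun x => -(2*(k:ℝ)+3+x)⁻¹) '' A))
    (hSsub : (fun x => -(2*(k:ℝ)+3+x)⁻¹) '' A ⊆ Ioo (G-2) G) :
    nuO ((fun x => -(2*(k:ℝ)+3+x)⁻¹) '' A)
      = ∫⁻ x in A, ENNReal.ofReal (1/((2*(k:ℝ)+2+x)*(2*(k:ℝ)+3+x))) := by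
  have hG := G_gt
  have hd : ∀ x ∈ A, (0:ℝ) < 2*(k:ℝ)+2+x := by
    intro x hx
    obtain ⟨h1, h2⟩ := hA hx
    have : (0:ℝ) ≤ (k:ℝ) := Nat.cast_nonneg k
    linarith
  have hd3 : ∀ x ∈ A, (0:ℝ) < 2*(k:ℝ)+3+x := fun x hx => by linarith [hd x hx]
  rw [nuO_apply hSm hSsub]
  rw [lintegral_image_1d hAm
    (f' := fun x => 1/(2*(k:ℝ)+3+x)^2)
    (fun x hx => by
      have h := ((((hasDerivAt_id x).const_add (2*(k:ℝ)+3)).inv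
        (ne_of_gt (hd3 x hx))).neg)
      have h2 := h.hasDerivWithinAt (s := A)
      simp only [Pi.neg_def, Pi.inv_def, id] at h2
      rw [show (1:ℝ)/(2*(k:ℝ)+3+x)^2 = -(-1/(2*(k:ℝ)+3+x)^2) by ring]
      exact h2)
    (fun a ra b rb hab => by
      have := inv_injective (neg_injective hab)
      linarith [this])
    (fun y => ENNReal.ofReal (1/(1+y)))]
  apply setLIntegral_congr_fun hAm
  intro x hx
  dsimp only
  have h2 := hd x hx
  have h3 := hd3 x hx
  rw [← ENNReal.ofReal_mul (abs_nonneg _)]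
  congr 1
  have h4 : (0:ℝ) < 1 + -(2*(k:ℝ)+3+x)⁻¹ := by
    have : (2*(k:ℝ)+3+x)⁻¹ < 1 := by
      rw [inv_lt_one_iff₀]; right; linarith
    linarith
  rw [abs_div, abs_one, abs_of_pos (by positivity)]
  rw [div_mul_div_comm, one_mul, div_eq_div_iff (by positivity) (by positivity)]
  field_simp
  ring

/-! ### The telescoping series -/

lemma telescope {x : ℝ} (hx : x ∈ Ioo (G-2) G) :
    (∑' k:ℕ, ENNReal.ofReal (1/((2*(k:ℝ)+1+x)*(2*(k:ℝ)+2+x))))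
      + (∑' k:ℕ, ENNReal.ofReal (1/((2*(k:ℝ)+2+x)*(2*(k:ℝ)+3+x))))
      = ENNReal.ofReal (1/(1+x)) := by
  obtain ⟨hx1, hx2⟩ := hx
  have hG := G_gt
  set g : ℕ → ℝ := fun k => 1/(2*(k:ℝ)+1+x) with hg
  have hd : ∀ k : ℕ, (0:ℝ) < 2*(k:ℝ)+1+x := by
    intro k
    have : (0:ℝ) ≤ (k:ℝ) := Nat.cast_nonneg k
    linarith
  have hgnn : ∀ k, 0 ≤ g k - g (k+1) := by
    intro k
    have h1 := hd k
    have h2 := hd (k+1)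
    have : g (k+1) ≤ g k := by
      apply one_div_le_one_div_of_le h1
      push_cast; linarith
    linarith
  have hg0 : Filter.Tendsto g Filter.atTop (nhds 0) := by
    have hden : Filter.Tendsto (fun k : ℕ => 2*(k:ℝ)+1+x) Filter.atTop Filter.atTop := by
      apply Filter.tendsto_atTop_add_const_right
      apply Filter.tendsto_atTop_add_const_right
      exact (tendsto_natCast_atTop_atTop (R := ℝ)).const_mul_atTop (by norm_num)
    have := tendsto_inv_atTop_zero.comp hden
    exact this.congr (fun n => (one_div _).symm)
  have hsum : HasSum (fun k => g k - g (k+1)) (g 0) := by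
    rw [hasSum_iff_tendsto_nat_of_nonneg hgnn]
    have : ∀ n : ℕ, ∑ i ∈ Finset.range n, (g i - g (i+1)) = g 0 - g n :=
      fun n => Finset.sum_range_sub' g n
    simp_rw [this]
    simpa using (hg0.const_sub (g 0))
  have hterm : ∀ k : ℕ,
      ENNReal.ofReal (1/((2*(k:ℝ)+1+x)*(2*(k:ℝ)+2+x)))
        + ENNReal.ofReal (1/((2*(k:ℝ)+2+x)*(2*(k:ℝ)+3+x)))
        = ENNReal.ofReal (g k - g (k+1)) := by
    intro k
    have h1 := hd k
    have h2 : (0:ℝ) < 2*(k:ℝ)+2+x := by linarith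
    have h3 : (0:ℝ) < 2*(k:ℝ)+3+x := by linarith
    rw [← ENNReal.ofReal_add (by positivity) (by positivity)]
    congr 1
    have : g (k+1) = 1/(2*(k:ℝ)+3+x) := by
      simp only [hg]; push_cast; ring_nf
    rw [this, hg]
    rw [div_add_div _ _ (by positivity) (by positivity), div_sub_div _ _ (by positivity) (by positivity), div_eq_div_iff (by positivity) (by positivity)]
    ring
  calc (∑' k:ℕ, ENNReal.ofReal (1/((2*(k:ℝ)+1+x)*(2*(k:ℝ)+2+x))))
      + (∑' k:ℕ, ENNReal.ofReal (1/((2*(k:ℝ)+2+x)*(2*(k:ℝ)+3+x))))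
      = ∑' k:ℕ, ENNReal.ofReal (g k - g (k+1)) := by
        rw [← ENNReal.tsum_add]
        exact tsum_congr hterm
    _ = ENNReal.ofReal (∑' k:ℕ, (g k - g (k+1))) :=
        (ENNReal.ofReal_tsum_of_nonneg hgnn hsum.summable).symm
    _ = ENNReal.ofReal (1/(1+x)) := by
        rw [hsum.tsum_eq]
        simp [hg]

/-! ### Main theorem -/

/-- `ν_o` is a finite `τ_o`-invariant measure on `(G−2, G)`. -/
theorem nuO_finite_and_invariant :
    IsFiniteMeasure nuO ∧
    ∀ A : Set ℝ, MeasurableSet A → A ⊆ Ioo (G - 2) G →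
      nuO (tauO ⁻¹' A) = nuO A := by
  have hGgt := G_gt
  have hGlt := G_lt
  constructor
  · -- finiteness
    constructor
    rw [nuO, withDensity_apply _ MeasurableSet.univ, Measure.restrict_univ]
    calc ∫⁻ y, ENNReal.ofReal (1/(1+y)) ∂((volume : Measure ℝ).restrict (Ioo (G-2) G))
        ≤ ∫⁻ _, ENNReal.ofReal G ∂((volume : Measure ℝ).restrict (Ioo (G-2) G)) := by
          apply lintegral_mono_ae
          rw [ae_restrict_iff' measurableSet_Ioo]
          apply Filter.Eventually.of_forall
          rintro y ⟨h1, h2⟩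
          apply ENNReal.ofReal_le_ofReal
          have hy1 : (0:ℝ) < G - 1 := by linarith
          have h3 : 1/(1+y) ≤ 1/(G-1) := one_div_le_one_div_of_le hy1 (by linarith)
          rw [one_div (G-1), Ginv] at h3
          exact h3
      _ = ENNReal.ofReal G * volume (Ioo (G-2) G) := by
          rw [lintegral_const, Measure.restrict_apply_univ]
      _ < ⊤ := ENNReal.mul_lt_top ENNReal.ofReal_lt_top
          (by rw [Real.volume_Ioo]; exact ENNReal.ofReal_lt_top)
  · intro A hAm hA
    have hPsub : ∀ k, SP A k ⊆ Ioo (G-2) G := by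
      intro k y hy
      have h1 : y ∈ ⋃ k, SP A k := mem_iUnion.mpr ⟨k, hy⟩
      rw [← union_SP hA] at h1
      obtain ⟨-, h0, hG⟩ := h1
      exact ⟨by linarith, hG⟩
    have hNsub : ∀ k, SN A k ⊆ Ioo (G-2) G := by
      intro k y hy
      have h1 : y ∈ ⋃ k, SN A k := mem_iUnion.mpr ⟨k, hy⟩
      rw [← union_SN hA] at h1
      obtain ⟨-, hl, h0⟩ := h1
      exact ⟨hl, by linarith⟩
    have hIoo_compl : nuO (Ioo (G-2) G)ᶜ = 0 := by
      rw [nuO, withDensity_apply _ measurableSet_Ioo.compl,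
        Measure.restrict_restrict measurableSet_Ioo.compl, compl_inter_self,
        Measure.restrict_empty, lintegral_zero_measure]
    have hsub0 : nuO (tauO ⁻¹' A) = nuO (tauO ⁻¹' A ∩ Ioo (G-2) G) := by
      apply le_antisymm
      · calc nuO (tauO ⁻¹' A)
            ≤ nuO ((tauO ⁻¹' A ∩ Ioo (G-2) G) ∪ (Ioo (G-2) G)ᶜ) := by
              apply measure_mono
              intro y hy
              by_cases h : y ∈ Ioo (G-2) G
              · exact Or.inl ⟨hy, h⟩
              · exact Or.inr h
          _ ≤ nuO (tauO ⁻¹' A ∩ Ioo (G-2) G) + nuO (Ioo (G-2) G)ᶜ := measure_union_le _ _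
          _ = nuO (tauO ⁻¹' A ∩ Ioo (G-2) G) := by rw [hIoo_compl, add_zero]
      · exact measure_mono inter_subset_left
    have hzero : nuO {(0:ℝ)} = 0 := by
      rw [nuO_apply (measurableSet_singleton 0)
        (by intro y hy; rw [mem_singleton_iff] at hy; subst hy
            exact ⟨by linarith, by linarith⟩)]
      apply setLIntegral_measure_zero
      exact Real.volume_singleton
    set P := tauO ⁻¹' A ∩ Ioo 0 G with hPdef
    set N := tauO ⁻¹' A ∩ Ioo (G-2) 0 with hNdef
    have hPm : MeasurableSet P := (measurable_tauO hAm).inter measurableSet_Ioo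
    have hNm : MeasurableSet N := (measurable_tauO hAm).inter measurableSet_Ioo
    have hsplit : nuO (tauO ⁻¹' A ∩ Ioo (G-2) G) = nuO N + nuO P := by
      apply le_antisymm
      · have hsub : tauO ⁻¹' A ∩ Ioo (G-2) G ⊆ (N ∪ P) ∪ {0} := by
          rintro y ⟨hyA, hy1, hy2⟩
          rcases lt_trichotomy y 0 with h|h|h
          · exact Or.inl (Or.inl ⟨hyA, hy1, h⟩)
          · exact Or.inr (by simp [h])
          · exact Or.inl (Or.inr ⟨hyA, h, hy2⟩)
        calc nuO (tauO ⁻¹' A ∩ Ioo (G-2) G) ≤ nuO ((N ∪ P) ∪ {0}) := measure_mono hsub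
          _ ≤ nuO (N ∪ P) + nuO {0} := measure_union_le _ _
          _ = nuO (N ∪ P) := by rw [hzero, add_zero]
          _ ≤ nuO N + nuO P := measure_union_le _ _
      · have hdisj : Disjoint N P := by
          apply Disjoint.mono inter_subset_right inter_subset_right
          rw [Set.disjoint_left]
          rintro y ⟨h1, h2⟩ ⟨h3, h4⟩
          linarith
        rw [← measure_union hdisj hPm]
        apply measure_mono
        apply union_subset
        · rintro y ⟨hyA, h1, h2⟩
          exact ⟨hyA, h1, by linarith⟩
        · rintro y ⟨hyA, h1, h2⟩
          exact ⟨hyA, by linarith, h2⟩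
    have hP : nuO P = ∑' k, nuO (SP A k) := by
      rw [hPdef, union_SP hA]
      exact measure_iUnion (SP_pairwise A) (fun k => SP_meas hAm k)
    have hN : nuO N = ∑' k, nuO (SN A k) := by
      rw [hNdef, union_SN hA]
      exact measure_iUnion (SN_pairwise A) (fun k => SN_meas hAm k)
    have hPk : ∀ k, nuO (SP A k)
        = ∫⁻ x in A, ENNReal.ofReal (1/((2*(k:ℝ)+1+x)*(2*(k:ℝ)+2+x))) := by
      intro k
      have him := SP_eq_image hA k
      have hm : MeasurableSet ((fun x => (2*(k:ℝ)+1+x)⁻¹) '' A) := him ▸ SP_meas hAm k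
      have hsub : (fun x => (2*(k:ℝ)+1+x)⁻¹) '' A ⊆ Ioo (G-2) G := him ▸ hPsub k
      rw [him]
      exact nuO_image_P hAm hA k hm hsub
    have hNk : ∀ k, nuO (SN A k)
        = ∫⁻ x in A, ENNReal.ofReal (1/((2*(k:ℝ)+2+x)*(2*(k:ℝ)+3+x))) := by
      intro k
      have him := SN_eq_image hA k
      have hm : MeasurableSet ((fun x => -(2*(k:ℝ)+3+x)⁻¹) '' A) := him ▸ SN_meas hAm k
      have hsub : (fun x => -(2*(k:ℝ)+3+x)⁻¹) '' A ⊆ Ioo (G-2) G := him ▸ hNsub k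
      rw [him]
      exact nuO_image_N hAm hA k hm hsub
    have hmP : ∀ k:ℕ, Measurable
        (fun x : ℝ => ENNReal.ofReal (1/((2*(k:ℝ)+1+x)*(2*(k:ℝ)+2+x)))) := by
      intro k
      apply Measurable.ennreal_ofReal
      simp only [one_div]
      exact ((measurable_const.add measurable_id).mul (measurable_const.add measurable_id)).inv
    have hmN : ∀ k:ℕ, Measurable
        (fun x : ℝ => ENNReal.ofReal (1/((2*(k:ℝ)+2+x)*(2*(k:ℝ)+3+x)))) := by
      intro k
      apply Measurable.ennreal_ofReal
      simp only [one_div]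
      exact ((measurable_const.add measurable_id).mul (measurable_const.add measurable_id)).inv
    calc nuO (tauO ⁻¹' A) = nuO N + nuO P := by rw [hsub0, hsplit]
      _ = (∑' k, nuO (SN A k)) + (∑' k, nuO (SP A k)) := by rw [hN, hP]
      _ = (∫⁻ x in A, ∑' k:ℕ, ENNReal.ofReal (1/((2*(k:ℝ)+2+x)*(2*(k:ℝ)+3+x))))
          + (∫⁻ x in A, ∑' k:ℕ, ENNReal.ofReal (1/((2*(k:ℝ)+1+x)*(2*(k:ℝ)+2+x)))) := by
          simp_rw [hNk, hPk]
          rw [lintegral_tsum (fun k => (hmN k).aemeasurable),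
            lintegral_tsum (fun k => (hmP k).aemeasurable)]
      _ = ∫⁻ x in A, ((∑' k:ℕ, ENNReal.ofReal (1/((2*(k:ℝ)+2+x)*(2*(k:ℝ)+3+x))))
          + (∑' k:ℕ, ENNReal.ofReal (1/((2*(k:ℝ)+1+x)*(2*(k:ℝ)+2+x))))) := by
          rw [lintegral_add_left (Measurable.ennreal_tsum hmN)]
      _ = ∫⁻ x in A, ENNReal.ofReal (1/(1+x)) := by
          apply setLIntegral_congr_fun hAm
          intro x hx
          dsimp only
          rw [add_comm]
          exact telescope (hA hx)
      _ = nuO A := (nuO_apply hAm hA).symm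
end

section
/- The map ρ_e sends pairs of irrational numbers in S_e to pairs of irrational numbers in S_e, it is a bijection of the set of such pairs onto itself, and for every irrational pair (x,y) ∈ S_e one has J_e(ρ_e(x,y)) = T̃_e(J_e(x,y)); equivalently, J_e ∘ ρ_e ∘ J_e⁻¹ = T̃_e. -/
open Set

/-- `a_e(x)`: the unique even integer among `⌊1/x⌋`, `⌊1/x⌋ + 1`. -/
noncomputable def aE (x : ℝ) : ℤ := if Even ⌊1 / x⌋ then ⌊1 / x⌋ else ⌊1 / x⌋ + 1

/-- `ε_e(x) = sign(1/x − a_e(x))`. -/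
noncomputable def epsE (x : ℝ) : ℝ := if 0 < 1 / x - aE x then 1 else -1

/-- The even-continued-fraction Gauss map `T_e(x) = |1/x − a_e(x)|`. -/
noncomputable def TE (x : ℝ) : ℝ := |1 / x - aE x|

/-- The extension `T̃_e(x, y, ε) = (T_e x, ε_e(x)/(a_e(x)+y), −ε_e(x)·ε)`. -/
noncomputable def tTE (q : ℝ × ℝ × ℝ) : ℝ × ℝ × ℝ :=
  (TE q.1, epsE q.1 / ((aE q.1 : ℝ) + q.2.1), -epsE q.1 * q.2.2)

/-- For `|x| > 1`, the unique even integer among `⌊|x|⌋`, `⌊|x|⌋ + 1`. -/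
noncomputable def aAbsE (x : ℝ) : ℤ :=
  if Even ⌊|x|⌋ then ⌊|x|⌋ else ⌊|x|⌋ + 1

/-- The first-return map `ρ_e(x,y) = (g x, g y)`, `g t = 1/(sign(x)·a(x) − t)`. -/
noncomputable def rhoE (p : ℝ × ℝ) : ℝ × ℝ :=
  (1 / (sgn p.1 * (aAbsE p.1 : ℝ) - p.1), 1 / (sgn p.1 * (aAbsE p.1 : ℝ) - p.2))

/-- Pairs of irrational numbers in `S_e = ((−∞,−1) ∪ (1,∞)) × (−1,1)`. -/
def SEirr : Set (ℝ × ℝ) :=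
  {p | Irrational p.1 ∧ Irrational p.2 ∧
    (1 < p.1 ∨ p.1 < -1) ∧ -1 < p.2 ∧ p.2 < 1}

/-- The map `J_e(x,y) = (1/x, −y, 1)` if `x > 1` and `(−1/x, y, −1)` if `x < −1`. -/
noncomputable def JE (p : ℝ × ℝ) : ℝ × ℝ × ℝ :=
  if 1 < p.1 then (1 / p.1, -p.2, 1) else (-(1 / p.1), p.2, -1)

/-- Irrational triples in `Ω̃_e = (0,1) × (−1,1) × {±1}`. -/
def OmegaEtildeIrr : Set (ℝ × ℝ × ℝ) :=
  {q | Irrational q.1 ∧ 0 < q.1 ∧ q.1 < 1 ∧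
    Irrational q.2.1 ∧ -1 < q.2.1 ∧ q.2.1 < 1 ∧ (q.2.2 = 1 ∨ q.2.2 = -1)}

/-! ### Auxiliary lemmas -/

lemma irr_abs {x : ℝ} (hx : Irrational x) : Irrational |x| := by
  rcases abs_choice x with h | h <;> rw [h]
  exacts [hx, hx.neg]

/-- An even integer within distance 1 of a real number is unique. -/
lemma even_int_unique {b c : ℤ} (hb : Even b) (hc : Even c) {t : ℝ}
    (h1 : |(b : ℝ) - t| < 1) (h2 : |(c : ℝ) - t| < 1) : b = c := by
  obtain ⟨k, rfl⟩ := hb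
  obtain ⟨l, rfl⟩ := hc
  rw [abs_lt] at h1 h2
  have hl : ((k + k : ℤ) : ℝ) - ((l + l : ℤ) : ℝ) < 2 := by
    push_cast at h1 h2 ⊢; linarith
  have hg : (-2 : ℝ) < ((k + k : ℤ) : ℝ) - ((l + l : ℤ) : ℝ) := by
    push_cast at h1 h2 ⊢; linarith
  have h1' : (k + k : ℤ) - (l + l) < 2 := by exact_mod_cast hl
  have h2' : (-2 : ℤ) < (k + k : ℤ) - (l + l) := by exact_mod_cast hg
  omega

/-- The signed version of `aAbsE`. -/
noncomputable def bbE (x : ℝ) : ℤ := if 0 < x then aAbsE x else -aAbsE x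

lemma sgn_mul_aAbsE (x : ℝ) : sgn x * (aAbsE x : ℝ) = (bbE x : ℝ) := by
  unfold sgn bbE
  split_ifs <;> push_cast <;> ring

lemma rhoE_eq (x y : ℝ) :
    rhoE (x, y) = (1 / ((bbE x : ℝ) - x), 1 / ((bbE x : ℝ) - y)) := by
  simp only [rhoE, sgn_mul_aAbsE]

lemma aAbsE_spec {x : ℝ} (hx : Irrational x) (h1 : 1 < |x|) :
    Even (aAbsE x) ∧ 2 ≤ aAbsE x ∧ (aAbsE x : ℝ) - 1 < |x| ∧ |x| < (aAbsE x : ℝ) + 1 := by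
  have hxa : Irrational |x| := irr_abs hx
  have h0 : (⌊|x|⌋ : ℝ) ≤ |x| := Int.floor_le _
  have hne : |x| ≠ (⌊|x|⌋ : ℝ) := hxa.ne_int _
  have h2 : |x| < (⌊|x|⌋ : ℝ) + 1 := Int.lt_floor_add_one _
  have hn1 : 1 ≤ ⌊|x|⌋ := by
    rw [Int.le_floor]; exact_mod_cast h1.le
  have hlt : (⌊|x|⌋ : ℝ) < |x| := lt_of_le_of_ne h0 (Ne.symm hne)
  unfold aAbsE
  split_ifs with h
  · obtain ⟨k, hk⟩ := h
    exact ⟨⟨k, hk⟩, by omega, by linarith, by linarith⟩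
  · have he : Even (⌊|x|⌋ + 1) := Int.even_add_one.2 h
    obtain ⟨k, hk⟩ := he
    refine ⟨⟨k, hk⟩, by omega, by push_cast; linarith, by push_cast; linarith⟩

lemma bbE_spec {x : ℝ} (hx : Irrational x) (h1 : 1 < x ∨ x < -1) :
    Even (bbE x) ∧ |(bbE x : ℝ) - x| < 1 ∧ (1 < x → 2 ≤ bbE x) ∧ (x < -1 → bbE x ≤ -2) := by
  have habs : 1 < |x| := by
    rcases h1 with h | h
    · exact lt_abs.2 (Or.inl h)
    · exact lt_abs.2 (Or.inr (by linarith))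
  obtain ⟨heven, h2a, hlo, hhi⟩ := aAbsE_spec hx habs
  unfold bbE
  rcases h1 with h | h
  · have hx0 : 0 < x := by linarith
    rw [if_pos hx0]
    rw [abs_of_pos hx0] at hlo hhi
    refine ⟨heven, ?_, fun _ => h2a, fun hc => absurd hc (by linarith)⟩
    rw [abs_lt]; constructor <;> linarith
  · have hx0 : ¬ 0 < x := by linarith
    rw [if_neg hx0]
    rw [abs_of_neg (by linarith : x < 0)] at hlo hhi
    refine ⟨heven.neg, ?_, fun hc => absurd hc (by linarith), fun _ => by omega⟩
    rw [abs_lt]; push_cast; constructor <;> linarith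

lemma bbE_eq {x : ℝ} (hx : Irrational x) (h1 : 1 < x ∨ x < -1) {c : ℤ} (hc : Even c)
    (h : |(c : ℝ) - x| < 1) : bbE x = c :=
  even_int_unique (bbE_spec hx h1).1 hc (bbE_spec hx h1).2.1 h

/-- `2 * round (t/2)` is an even integer within distance 1 of the irrational `t`. -/
lemma round_even_close {t : ℝ} (ht : Irrational t) :
    |((2 * round (t / 2) : ℤ) : ℝ) - t| < 1 := by
  have h := abs_sub_round (t / 2)
  have hne : |t / 2 - (round (t / 2) : ℝ)| ≠ 1 / 2 := by
    intro hEq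
    rcases (abs_eq (by norm_num : (0:ℝ) ≤ 1/2)).1 hEq with h' | h'
    · exact ht.ne_int (2 * round (t / 2) + 1) (by push_cast; linarith)
    · exact ht.ne_int (2 * round (t / 2) - 1) (by push_cast; linarith)
  have hlt : |t / 2 - (round (t / 2) : ℝ)| < 1 / 2 := lt_of_le_of_ne h hne
  have heq : ((2 * round (t / 2) : ℤ) : ℝ) - t = -2 * (t / 2 - (round (t / 2) : ℝ)) := by
    push_cast; ring
  rw [heq, abs_mul]
  have : |(-2 : ℝ)| = 2 := by norm_num
  rw [this]
  linarith

lemma mapsTo_rhoE : Set.MapsTo rhoE SEirr SEirr := by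
  rintro ⟨x, y⟩ ⟨hx, hy, hx1, hy1, hy2⟩
  obtain ⟨heb, hd, hpos, hneg⟩ := bbE_spec hx hx1
  set b := bbE x with hbdef
  have hdx : (b : ℝ) - x ≠ 0 := sub_ne_zero.2 fun h => hx.ne_int b h.symm
  have hirr1 : Irrational (1 / ((b : ℝ) - x)) := by
    rw [one_div]; exact (hx.intCast_sub b).inv
  have hirr2 : Irrational (1 / ((b : ℝ) - y)) := by
    rw [one_div]; exact (hy.intCast_sub b).inv
  have h0 : 0 < |(b : ℝ) - x| := abs_pos.2 hdx
  have habs1 : 1 < |1 / ((b : ℝ) - x)| := by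
    rw [abs_div, abs_one, lt_div_iff₀ h0]; linarith
  have hb1 : 1 < 1 / ((b : ℝ) - x) ∨ 1 / ((b : ℝ) - x) < -1 := by
    rcases lt_abs.1 habs1 with h | h
    · exact Or.inl h
    · exact Or.inr (by linarith)
  have hy' : -1 < 1 / ((b : ℝ) - y) ∧ 1 / ((b : ℝ) - y) < 1 := by
    rcases hx1 with h | h
    · have hb2 : (2 : ℝ) ≤ (b : ℝ) := by exact_mod_cast hpos h
      have hdy : (1 : ℝ) < (b : ℝ) - y := by linarith
      have hp : 0 < 1 / ((b : ℝ) - y) := one_div_pos.2 (by linarith)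
      refine ⟨by linarith, ?_⟩
      rw [div_lt_one (by linarith)]; linarith
    · have hb2 : (b : ℝ) ≤ -2 := by exact_mod_cast hneg h
      have hdy : (b : ℝ) - y < -1 := by linarith
      have hp : 1 / ((b : ℝ) - y) < 0 := one_div_neg.2 (by linarith)
      refine ⟨?_, by linarith⟩
      rw [lt_div_iff_of_neg (by linarith : (b : ℝ) - y < 0)]; linarith
  rw [rhoE_eq]
  exact ⟨hirr1, hirr2, hb1, hy'.1, hy'.2⟩

/-- Inverse of `rhoE` on `SEirr`. -/
noncomputable def rhoEInv (p : ℝ × ℝ) : ℝ × ℝ :=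
  (((2 * round (1 / p.2 / 2) : ℤ) : ℝ) - 1 / p.1,
   ((2 * round (1 / p.2 / 2) : ℤ) : ℝ) - 1 / p.2)

lemma rhoEInv_spec {x' y' : ℝ} (h : (x', y') ∈ SEirr) :
    rhoEInv (x', y') ∈ SEirr ∧ rhoE (rhoEInv (x', y')) = (x', y') := by
  obtain ⟨hx, hy, hx1, hy1, hy2⟩ := h
  simp only at hx hy hx1 hy1 hy2
  have hy0 : y' ≠ 0 := fun h0 => hy.ne_int 0 (by rw [h0]; norm_num)
  have hx0 : x' ≠ 0 := by
    intro h0; rcases hx1 with h | h <;> rw [h0] at h <;> linarith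
  set c := 1 / y' with hc
  have hcirr : Irrational c := by rw [hc, one_div]; exact hy.inv
  set b : ℤ := 2 * round (c / 2) with hbdef
  have heb : Even b := ⟨round (c / 2), two_mul _⟩
  have hbc : |(b : ℝ) - c| < 1 := round_even_close hcirr
  have habs : rhoEInv (x', y') = ((b : ℝ) - 1 / x', (b : ℝ) - c) := rfl
  have hcb : (2 : ℝ) ≤ (b : ℝ) ∨ (b : ℝ) ≤ -2 := by
    rcases lt_or_gt_of_ne hy0 with hnegy | hposy
    · right
      have hc1 : c < -1 := by
        rw [hc, div_lt_iff_of_neg hnegy]; linarith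
      have hblt : (b : ℝ) < 0 := by have := abs_lt.1 hbc; linarith
      have hb0 : b < 0 := by exact_mod_cast hblt
      obtain ⟨k, hk⟩ := heb
      have : b ≤ -2 := by omega
      exact_mod_cast this
    · left
      have hc1 : 1 < c := by
        rw [hc, lt_div_iff₀ hposy, one_mul]; exact hy2
      have hbgt : (0 : ℝ) < (b : ℝ) := by have := abs_lt.1 hbc; linarith
      have hb0 : 0 < b := by exact_mod_cast hbgt
      obtain ⟨k, hk⟩ := heb
      have : 2 ≤ b := by omega
      exact_mod_cast this
  have h1x : |1 / x'| < 1 := by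
    have h1 : 1 < |x'| := by
      rcases hx1 with h | h
      · exact lt_abs.2 (Or.inl h)
      · exact lt_abs.2 (Or.inr (by linarith))
    rw [abs_div, abs_one, div_lt_one (by linarith)]; exact h1
  have h1x' := abs_lt.1 h1x
  have hxirr : Irrational ((b : ℝ) - 1 / x') := by
    rw [one_div]; exact hx.inv.intCast_sub b
  have hyirr : Irrational ((b : ℝ) - c) := hcirr.intCast_sub b
  have hxb : 1 < (b : ℝ) - 1 / x' ∨ (b : ℝ) - 1 / x' < -1 := by
    rcases hcb with hb2 | hb2
    · left; linarith
    · right; linarith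
  have hyb := abs_lt.1 hbc
  have hmem : rhoEInv (x', y') ∈ SEirr := by
    rw [habs]
    exact ⟨hxirr, hyirr, hxb, hyb.1, hyb.2⟩
  refine ⟨hmem, ?_⟩
  rw [habs, rhoE_eq]
  have hbb : bbE ((b : ℝ) - 1 / x') = b := by
    refine bbE_eq hxirr hxb heb ?_
    rw [show (b : ℝ) - ((b : ℝ) - 1 / x') = 1 / x' from by ring]
    exact h1x
  rw [hbb]
  have e1 : (b : ℝ) - ((b : ℝ) - 1 / x') = 1 / x' := by ring
  have e2 : (b : ℝ) - ((b : ℝ) - c) = c := by ring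
  rw [e1, e2, one_div_one_div, hc, one_div_one_div]

lemma rhoEInv_rhoE {p : ℝ × ℝ} (hp : p ∈ SEirr) : rhoEInv (rhoE p) = p := by
  obtain ⟨x, y⟩ := p
  obtain ⟨hx, hy, hx1, hy1, hy2⟩ := hp
  simp only at hx hy hx1 hy1 hy2
  obtain ⟨heb, hd, hpos, hneg⟩ := bbE_spec hx hx1
  set b := bbE x with hbdef
  have hbR : (2 : ℝ) ≤ (b : ℝ) ∨ (b : ℝ) ≤ -2 := by
    rcases hx1 with h | h
    · left; exact_mod_cast hpos h
    · right; exact_mod_cast hneg h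
  have hdy1 : 1 < (b : ℝ) - y ∨ (b : ℝ) - y < -1 := by
    rcases hbR with h | h
    · left; linarith
    · right; linarith
  have hdy0 : (b : ℝ) - y ≠ 0 := by
    rcases hdy1 with h | h
    · exact ne_of_gt (by linarith)
    · exact ne_of_lt (by linarith)
  have hdx0 : (b : ℝ) - x ≠ 0 := sub_ne_zero.2 fun hh => hx.ne_int b hh.symm
  rw [rhoE_eq]
  have hirr : Irrational ((b : ℝ) - y) := hy.intCast_sub b
  have hsimp : 1 / (1 / ((b : ℝ) - y)) = (b : ℝ) - y := one_div_one_div _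
  have hb' : (2 * round (((b : ℝ) - y) / 2) : ℤ) = b := by
    refine even_int_unique ⟨round (((b : ℝ) - y) / 2), two_mul _⟩ heb
      (round_even_close hirr) ?_
    rw [show (b : ℝ) - ((b : ℝ) - y) = y from by ring]
    exact abs_lt.2 ⟨hy1, hy2⟩
  show (((2 * round (1 / (1 / ((b : ℝ) - y)) / 2) : ℤ) : ℝ) - 1 / (1 / ((b : ℝ) - x)),
        ((2 * round (1 / (1 / ((b : ℝ) - y)) / 2) : ℤ) : ℝ) - 1 / (1 / ((b : ℝ) - y))) = (x, y)
  rw [hsimp, hb', one_div_one_div]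
  rw [Prod.ext_iff]
  constructor
  · show (b : ℝ) - ((b : ℝ) - x) = x; ring
  · show (b : ℝ) - ((b : ℝ) - y) = y; ring

lemma rhoE_bijOn : Set.BijOn rhoE SEirr SEirr := by
  refine Set.InvOn.bijOn ⟨fun p hp => rhoEInv_rhoE hp, fun p hp => ?_⟩ mapsTo_rhoE
    (fun p hp => ?_)
  · obtain ⟨x', y'⟩ := p
    exact (rhoEInv_spec hp).2
  · obtain ⟨x', y'⟩ := p
    exact (rhoEInv_spec hp).1

/-- Inverse of `JE`. -/
noncomputable def jEInv (q : ℝ × ℝ × ℝ) : ℝ × ℝ :=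
  if q.2.2 = 1 then (1 / q.1, -q.2.1) else (-(1 / q.1), q.2.1)

lemma jE_bijOn : Set.BijOn JE SEirr OmegaEtildeIrr := by
  have hmapsto : MapsTo JE SEirr OmegaEtildeIrr := by
    rintro ⟨x, y⟩ ⟨hx, hy, hx1, hy1, hy2⟩
    simp only at hx hy hx1 hy1 hy2
    rcases hx1 with h | h
    · have hx0 : (0 : ℝ) < x := lt_trans one_pos h
      rw [show JE (x, y) = (1 / x, -y, 1) from if_pos h]
      exact ⟨by rw [one_div]; exact hx.inv, one_div_pos.2 hx0,
        by rw [div_lt_one hx0]; linarith, hy.neg, by linarith, by linarith, Or.inl rfl⟩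
    · have hx0 : x < 0 := by linarith
      rw [show JE (x, y) = (-(1 / x), y, -1) from if_neg (by linarith)]
      refine ⟨by rw [one_div]; exact hx.inv.neg, ?_, ?_, hy, hy1, hy2, Or.inr rfl⟩
      · have : 1 / x < 0 := one_div_neg.2 hx0; linarith
      · have : -1 < 1 / x := by rw [lt_div_iff_of_neg hx0]; linarith
        linarith
  have hinv1 : ∀ p ∈ SEirr, jEInv (JE p) = p := by
    rintro ⟨x, y⟩ ⟨hx, hy, hx1, hy1, hy2⟩
    simp only at hx hy hx1 hy1 hy2
    rcases hx1 with h | h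
    · rw [show JE (x, y) = (1 / x, -y, 1) from if_pos h]
      rw [show jEInv (1 / x, -y, 1) = (1 / (1 / x), -(-y)) from if_pos rfl]
      rw [one_div_one_div, neg_neg]
    · rw [show JE (x, y) = (-(1 / x), y, -1) from if_neg (by linarith)]
      rw [show jEInv (-(1 / x), y, -1) = (-(1 / (-(1 / x))), y) from if_neg (by norm_num)]
      have hx0 : x ≠ 0 := fun h0 => by rw [h0] at h; norm_num at h
      have : -(1 / -(1 / x)) = x := by field_simp
      rw [this]
  have hmapsto2 : MapsTo jEInv OmegaEtildeIrr SEirr := by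
    rintro ⟨u, v, e⟩ ⟨hu, hu0, hu1, hv, hv1, hv2, he⟩
    simp only at hu hu0 hu1 hv hv1 hv2 he
    have h1u : 1 < 1 / u := by rw [lt_div_iff₀ hu0, one_mul]; exact hu1
    rcases he with rfl | rfl
    · rw [show jEInv (u, v, 1) = (1 / u, -v) from if_pos rfl]
      exact ⟨by rw [one_div]; exact hu.inv, hv.neg, Or.inl h1u, by linarith, by linarith⟩
    · rw [show jEInv (u, v, -1) = (-(1 / u), v) from if_neg (by norm_num)]
      exact ⟨by rw [one_div]; exact hu.inv.neg, hv, Or.inr (by linarith), hv1, hv2⟩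
  have hinv2 : ∀ q ∈ OmegaEtildeIrr, JE (jEInv q) = q := by
    rintro ⟨u, v, e⟩ ⟨hu, hu0, hu1, hv, hv1, hv2, he⟩
    simp only at hu hu0 hu1 hv hv1 hv2 he
    have hu0' : u ≠ 0 := ne_of_gt hu0
    have h1u : 1 < 1 / u := by rw [lt_div_iff₀ hu0, one_mul]; exact hu1
    rcases he with rfl | rfl
    · rw [show jEInv (u, v, 1) = (1 / u, -v) from if_pos rfl]
      rw [show JE (1 / u, -v) = (1 / (1 / u), -(-v), 1) from if_pos h1u]
      rw [one_div_one_div, neg_neg]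
    · rw [show jEInv (u, v, -1) = (-(1 / u), v) from if_neg (by norm_num)]
      have h1 : ¬(1 < -(1 / u)) := by linarith
      rw [show JE (-(1 / u), v) = (-(1 / (-(1 / u))), v, -1) from if_neg h1]
      have : -(1 / -(1 / u)) = u := by field_simp
      rw [this]
  exact Set.InvOn.bijOn ⟨hinv1, hinv2⟩ hmapsto hmapsto2

lemma conj_tTE : ∀ p ∈ SEirr, JE (rhoE p) = tTE (JE p) := by
  rintro ⟨x, y⟩ ⟨hx, hy, hx1, hy1, hy2⟩
  simp only at hx hy hx1 hy1 hy2
  obtain ⟨heb, hd, hpos, hneg⟩ := bbE_spec hx hx1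
  rw [rhoE_eq]
  rcases hx1 with h | h
  · -- case 1 < x
    have hx0 : (0 : ℝ) < x := by linarith
    have hbb : bbE x = aAbsE x := if_pos hx0
    set a := aAbsE x with ha
    rw [hbb] at hd hpos ⊢
    have hb2 : (2 : ℝ) ≤ (a : ℝ) := by exact_mod_cast hpos h
    have hdabs := abs_lt.1 hd
    have hxx : 1 / (1 / x) = x := one_div_one_div x
    have haE : aE (1 / x) = a := by
      unfold aE; rw [hxx, ha]; unfold aAbsE; rw [abs_of_pos hx0]
    have hdy1 : (1 : ℝ) < (a : ℝ) - y := by linarith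
    rw [show JE (x, y) = (1 / x, -y, 1) from if_pos h]
    unfold tTE TE epsE
    simp only [haE, hxx]
    rcases lt_or_gt_of_ne (hx.ne_int a) with hlt | hgt
    · -- x < a, ε = -1
      have h1 : (1 : ℝ) < 1 / ((a : ℝ) - x) := by
        rw [lt_div_iff₀ (by linarith)]; linarith
      rw [show JE (1 / ((a : ℝ) - x), 1 / ((a : ℝ) - y)) =
          (1 / (1 / ((a : ℝ) - x)), -(1 / ((a : ℝ) - y)), 1) from if_pos h1]
      rw [one_div_one_div, if_neg (by linarith : ¬ (0 : ℝ) < x - (a : ℝ))]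
      rw [Prod.ext_iff, Prod.ext_iff]
      refine ⟨?_, ?_, by norm_num⟩
      · show (a : ℝ) - x = |x - (a : ℝ)|
        rw [abs_of_neg (by linarith)]; ring
      · show -(1 / ((a : ℝ) - y)) = -1 / ((a : ℝ) + -y)
        rw [neg_div]; ring_nf
    · -- a < x, ε = 1
      have h1 : 1 / ((a : ℝ) - x) < 0 := one_div_neg.2 (by linarith)
      rw [show JE (1 / ((a : ℝ) - x), 1 / ((a : ℝ) - y)) =
          (-(1 / (1 / ((a : ℝ) - x))), 1 / ((a : ℝ) - y), -1) from if_neg (by linarith)]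
      rw [one_div_one_div, if_pos (by linarith : (0 : ℝ) < x - (a : ℝ))]
      rw [Prod.ext_iff, Prod.ext_iff]
      refine ⟨?_, ?_, by norm_num⟩
      · show -((a : ℝ) - x) = |x - (a : ℝ)|
        rw [abs_of_pos (by linarith)]; ring
      · show 1 / ((a : ℝ) - y) = 1 / ((a : ℝ) + -y)
        ring_nf
  · -- case x < -1
    have hx0 : x < 0 := by linarith
    have hbb : bbE x = -aAbsE x := if_neg (by linarith)
    set a := aAbsE x with ha
    rw [hbb] at hd hneg ⊢
    have hcast : ((-a : ℤ) : ℝ) = -(a : ℝ) := by push_cast; ring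
    rw [hcast] at hd ⊢
    have hb2 : (2 : ℝ) ≤ (a : ℝ) := by
      have : -a ≤ -2 := hneg h
      have : (2 : ℤ) ≤ a := by omega
      exact_mod_cast this
    have hdabs := abs_lt.1 hd
    have hxne : x ≠ 0 := ne_of_lt hx0
    have hxx : 1 / (-(1 / x)) = -x := by
      field_simp
    have haE : aE (-(1 / x)) = a := by
      unfold aE; rw [hxx, ha]; unfold aAbsE; rw [abs_of_neg hx0]
    have hdy1 : -(a : ℝ) - y < -1 := by linarith
    rw [show JE (x, y) = (-(1 / x), y, -1) from if_neg (by linarith)]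
    unfold tTE TE epsE
    simp only [haE, hxx]
    have hnei : -x ≠ (a : ℝ) := fun hh => hx.neg.ne_int a hh
    rcases lt_or_gt_of_ne hnei with hlt | hgt
    · -- -x < a, ε = -1
      have h1 : 1 / (-(a : ℝ) - x) < 0 := one_div_neg.2 (by linarith)
      rw [show JE (1 / (-(a : ℝ) - x), 1 / (-(a : ℝ) - y)) =
          (-(1 / (1 / (-(a : ℝ) - x))), 1 / (-(a : ℝ) - y), -1) from if_neg (by linarith)]
      rw [one_div_one_div, if_neg (by linarith : ¬ (0 : ℝ) < -x - (a : ℝ))]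
      rw [Prod.ext_iff, Prod.ext_iff]
      refine ⟨?_, ?_, by norm_num⟩
      · show -(-(a : ℝ) - x) = |(-x) - (a : ℝ)|
        rw [abs_of_neg (by linarith)]; ring
      · show 1 / (-(a : ℝ) - y) = -1 / ((a : ℝ) + y)
        rw [neg_div]
        rw [show -(a : ℝ) - y = -((a : ℝ) + y) from by ring, one_div_neg_eq_neg_one_div]
    · -- a < -x, ε = 1
      have h1 : (1 : ℝ) < 1 / (-(a : ℝ) - x) := by
        rw [lt_div_iff₀ (by linarith)]; linarith
      rw [show JE (1 / (-(a : ℝ) - x), 1 / (-(a : ℝ) - y)) =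
          (1 / (1 / (-(a : ℝ) - x)), -(1 / (-(a : ℝ) - y)), 1) from if_pos h1]
      rw [one_div_one_div, if_pos (by linarith : (0 : ℝ) < -x - (a : ℝ))]
      rw [Prod.ext_iff, Prod.ext_iff]
      refine ⟨?_, ?_, by norm_num⟩
      · show -(a : ℝ) - x = |(-x) - (a : ℝ)|
        rw [abs_of_pos (by linarith)]; ring
      · show -(1 / (-(a : ℝ) - y)) = 1 / ((a : ℝ) + y)
        rw [show -(a : ℝ) - y = -((a : ℝ) + y) from by ring, one_div_neg_eq_neg_one_div, neg_neg]

/-- `ρ_e` maps irrational pairs of `S_e` to irrational pairs of `S_e`, is a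
bijection of this set onto itself, and is conjugated to `T̃_e` via the
bijection `J_e` from irrational pairs in `S_e` onto irrational triples in
`Ω̃_e`:  `J_e ∘ ρ_e = T̃_e ∘ J_e`, i.e. `J_e ∘ ρ_e ∘ J_e⁻¹ = T̃_e`. -/
theorem rhoE_bijOn_and_conj_tTE :
    Set.MapsTo rhoE SEirr SEirr ∧
    Set.BijOn rhoE SEirr SEirr ∧
    Set.BijOn JE SEirr OmegaEtildeIrr ∧
    ∀ p ∈ SEirr, JE (rhoE p) = tTE (JE p) :=
  ⟨mapsTo_rhoE, rhoE_bijOn, jE_bijOn, conj_tTE⟩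
end
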